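/- arXiv:2407.21360 — 3 statements merged into one kernel-verified Lean document; each statement's English description precedes it below -/
import Mathlib

section
/- For any positive integers c, t ≥ 1 and any graphs H1, H2 each with treewidth at most t, the strong product H1 ⊠ H2 has a c-colouring in which every monochromatic component has at most (t+1)^{2(1 − 1/√c)} · |V(H1 ⊠ H2)|^{1/⌊√c⌋} vertices. -/
open SimpleGraph

universe u v

/-- The strong product of two simple graphs. -/
def StrongProd {α : Type u} {β : Type v} (G : SimpleGraph α) (H : SimpleGraph β) :
    SimpleGraph (α × β) where
  Adj x y := (x.1 = y.1 ∧ H.Adj x.2 y.2) ∨ (x.2 = y.2 ∧ G.Adj x.1 y.1) ∨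
    (G.Adj x.1 y.1 ∧ H.Adj x.2 y.2)
  symm := by
    constructor
    rintro x y (⟨h1, h2⟩ | ⟨h1, h2⟩ | ⟨h1, h2⟩)
    · exact Or.inl ⟨h1.symm, h2.symm⟩
    · exact Or.inr (Or.inl ⟨h1.symm, h2.symm⟩)
    · exact Or.inr (Or.inr ⟨h1.symm, h2.symm⟩)
  loopless := by
    constructor
    rintro x (⟨h1, h2⟩ | ⟨h1, h2⟩ | ⟨h1, h2⟩)
    · exact h2.ne rfl
    · exact h2.ne rfl
    · exact h1.ne rfl

/-- The fan graph `F_n`: a path on `n` vertices (vertices `1,…,n`) together with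
one dominant vertex (vertex `0`) adjacent to all path vertices. -/
def Fan (n : ℕ) : SimpleGraph (Fin (n + 1)) :=
  SimpleGraph.fromRel (fun u v => u = 0 ∨ u.val + 1 = v.val)

/-- The cone over `m` disjoint copies of `G`: `m` pairwise disjoint copies of `G`
together with one new vertex adjacent to every vertex of every copy. -/
def GraphCone {V : Type u} (m : ℕ) (G : SimpleGraph V) :
    SimpleGraph (Option (Fin m × V)) where
  Adj x y :=
    match x, y with
    | none, none => False
    | none, some _ => True
    | some _, none => True
    | some (i, _u), some (j, _v) => i = j ∧ G.Adj _u _v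
  symm := by
    constructor
    rintro (_ | ⟨i, u⟩) (_ | ⟨j, v⟩) h
    · exact h
    · trivial
    · trivial
    · exact ⟨h.1.symm, h.2.symm⟩
  loopless := by
    constructor
    rintro (_ | ⟨i, u⟩) h
    · exact h
    · exact h.2.ne rfl

/-- `G` has a tree-decomposition of width at most `t`. -/
def TreewidthLE {V : Type u} (G : SimpleGraph V) (t : ℕ) : Prop :=
  ∃ (ι : Type) (T : SimpleGraph ι) (W : ι → Finset V),
    T.IsTree ∧
    (∀ ⦃u v : V⦄, G.Adj u v → ∃ x, u ∈ W x ∧ v ∈ W x) ∧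
    (∀ v : V, (T.induce {x | v ∈ W x}).Connected) ∧
    (∀ x, (W x).card ≤ t + 1)

/-- A set of vertices is monochromatic under a colouring `f`. -/
def IsMonochromatic {V : Type u} {c : ℕ} (f : V → Fin c) (S : Finset V) : Prop :=
  ∀ u ∈ S, ∀ v ∈ S, f u = f v

/-- Every monochromatic component of the colouring `f` of `G` has at most `k` vertices. -/
def ClusterLE {V : Type u} {c : ℕ} (G : SimpleGraph V) (f : V → Fin c) (k : ℕ) : Prop :=
  ∀ S : Finset V, IsMonochromatic f S → (G.induce (S : Set V)).Connected → S.card ≤ k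

/-- Every monochromatic component of the colouring `f` of `G` has at most `b` vertices
(real-valued bound). -/
def ClusterLEReal {V : Type u} {c : ℕ} (G : SimpleGraph V) (f : V → Fin c) (b : ℝ) : Prop :=
  ∀ S : Finset V, IsMonochromatic f S → (G.induce (S : Set V)).Connected → (S.card : ℝ) ≤ b
namespace TWProof

variable {α : Type*} {T : SimpleGraph α}

/-- Lift a walk whose support lies in `s` to a walk in the induced graph,
with support control. -/
lemma induce_walk_of_walk (T : SimpleGraph α) (s : Set α) :
    ∀ {a b : α} (p : T.Walk a b) (hp : ∀ x ∈ p.support, x ∈ s),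
    ∃ q : (T.induce s).Walk ⟨a, hp a p.start_mem_support⟩ ⟨b, hp b p.end_mem_support⟩,
      ∀ y ∈ q.support, (y : α) ∈ p.support := by
  intro a b p
  induction p with
  | nil =>
    intro hp
    exact ⟨SimpleGraph.Walk.nil, by simp⟩
  | @cons u v w h p ih =>
    intro hp
    have hp' : ∀ x ∈ p.support, x ∈ s := fun x hx => hp x (by simp [hx])
    obtain ⟨q, hq⟩ := ih hp'
    have hadj : (T.induce s).Adj ⟨u, hp u (SimpleGraph.Walk.start_mem_support _)⟩
        ⟨v, hp' v p.start_mem_support⟩ := h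
    refine ⟨SimpleGraph.Walk.cons hadj q, ?_⟩
    intro y hy
    rw [SimpleGraph.Walk.support_cons, List.mem_cons] at hy
    rcases hy with hy | hy
    · simp [hy]
    · simp [hq y hy]

/-- The inclusion homomorphism from an induced subgraph. -/
def induceHomVal (T : SimpleGraph α) (s : Set α) : T.induce s →g T :=
  ⟨Subtype.val, fun h => h⟩

lemma walk_of_induce_walk (T : SimpleGraph α) (s : Set α) {a b : ↥s}
    (q : (T.induce s).Walk a b) :
    ∃ p : T.Walk a.1 b.1, ∀ x ∈ p.support, x ∈ s := by
  refine ⟨q.map (induceHomVal T s), ?_⟩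
  intro x hx
  have hx' : x ∈ (q.map (induceHomVal T s)).support := hx
  rw [SimpleGraph.Walk.support_map] at hx'
  obtain ⟨y, _, rfl⟩ := List.mem_map.mp hx'
  exact y.2

section Tree

variable [DecidableEq α] (hT : T.IsTree)
include hT
set_option linter.unusedSectionVars false

/-- The unique path between two vertices of a tree. -/
noncomputable def tpath (r z : α) : T.Walk r z := (hT.existsUnique_path r z).choose

lemma tpath_isPath (r z : α) : (tpath hT r z).IsPath := (hT.existsUnique_path r z).choose_spec.1

lemma tpath_unique {r z : α} (w : T.Walk r z) (hw : w.IsPath) : w = tpath hT r z :=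
  (hT.existsUnique_path r z).choose_spec.2 w hw

lemma mem_support_all {x r z : α} (hx : x ∈ (tpath hT r z).support) (w : T.Walk r z) :
    x ∈ w.support := by
  have hb : w.bypass = tpath hT r z := tpath_unique hT w.bypass w.bypass_isPath
  exact w.support_bypass_subset (hb ▸ hx)

lemma below_of_avoid {x r z z₀ : α} (hx : x ∈ (tpath hT r z₀).support)
    (w : T.Walk z z₀) (hw : x ∉ w.support) : x ∈ (tpath hT r z).support := by
  by_contra h
  have := mem_support_all hT hx ((tpath hT r z).append w)
  rw [SimpleGraph.Walk.mem_support_append_iff] at this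
  exact this.elim h hw

lemma succ_unique {x y₁ y₂ : α} (h1 : T.Adj x y₁) (h2 : T.Adj x y₂)
    (w : T.Walk y₁ y₂) (hw : x ∉ w.support) : y₁ = y₂ := by
  have hp : w.bypass.IsPath := w.bypass_isPath
  have hxs : x ∉ w.bypass.support := fun hx => hw (w.support_bypass_subset hx)
  have hA : (SimpleGraph.Walk.cons h1 w.bypass).IsPath := by
    rw [SimpleGraph.Walk.cons_isPath_iff]; exact ⟨hp, hxs⟩
  have hB : (SimpleGraph.Walk.cons h2 (SimpleGraph.Walk.nil)).IsPath := by
    rw [SimpleGraph.Walk.cons_isPath_iff]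
    simp [h2.ne]
  have := (tpath_unique hT _ hA).trans (tpath_unique hT _ hB).symm
  have hlen := congrArg SimpleGraph.Walk.length this
  simp [SimpleGraph.Walk.length_cons] at hlen
  exact hlen.eq

end Tree

end TWProof

namespace TWProof

variable {α : Type*} {T : SimpleGraph α} [DecidableEq α] (hT : T.IsTree)
include hT

lemma exists_succ {x r z : α} (hx : x ∈ (tpath hT r z).support) (hxz : x ≠ z) :
    ∃ y, T.Adj x y ∧ y ∈ (tpath hT r z).support ∧
      (∃ w : T.Walk y z, x ∉ w.support) ∧
      (tpath hT r y).length = (tpath hT r x).length + 1 := by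
  set p := tpath hT r z with hp
  have hpp : p.IsPath := tpath_isPath hT r z
  set take := p.takeUntil x hx with htake
  set drop := p.dropUntil x hx with hdrop
  have hdp : drop.IsPath := hpp.dropUntil hx
  obtain ⟨y, hadj, q, hq⟩ := SimpleGraph.Walk.exists_eq_cons_of_ne hxz drop
  have hyq : y ∈ q.support := q.start_mem_support
  have hxq : x ∉ q.support := by
    have := hdp
    rw [hq, SimpleGraph.Walk.cons_isPath_iff] at this
    exact this.2
  have hydroptail : y ∈ drop.support.tail := by
    rw [hq, SimpleGraph.Walk.support_cons]
    exact hyq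
  have hytake : y ∉ take.support := by
    have hspec := p.take_spec hx
    have hnodup : p.support.Nodup := hpp.support_nodup
    rw [← hspec, SimpleGraph.Walk.support_append] at hnodup
    have hdisj := List.disjoint_of_nodup_append hnodup
    exact fun hmem => hdisj hmem hydroptail
  have hyp : y ∈ p.support := p.support_dropUntil_subset hx (by
    rw [← hdrop, hq, SimpleGraph.Walk.support_cons]; exact List.mem_cons_of_mem _ hyq)
  -- the walk r → y
  set w := take.append (SimpleGraph.Walk.cons hadj SimpleGraph.Walk.nil) with hw
  have hwpath : w.IsPath := by
    rw [← SimpleGraph.Walk.isPath_reverse_iff, hw]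
    rw [SimpleGraph.Walk.reverse_append]
    simp only [SimpleGraph.Walk.reverse_cons, SimpleGraph.Walk.reverse_nil,
      SimpleGraph.Walk.nil_append, SimpleGraph.Walk.cons_append,
      SimpleGraph.Walk.nil_append]
    rw [SimpleGraph.Walk.cons_isPath_iff]
    constructor
    · rw [SimpleGraph.Walk.isPath_reverse_iff]
      exact hpp.takeUntil hx
    · rw [SimpleGraph.Walk.support_reverse, List.mem_reverse]
      exact hytake
  have htpy : w = tpath hT r y := tpath_unique hT w hwpath
  have htpx : take = tpath hT r x := tpath_unique hT take (hpp.takeUntil hx)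
  refine ⟨y, hadj, hyp, ⟨q, hxq⟩, ?_⟩
  rw [← htpy, ← htpx, hw]
  simp [SimpleGraph.Walk.length_append]

end TWProof

namespace TWProof

lemma exists_crossing {α : Type*} {G : SimpleGraph α} {s : Set α} (P : α → Prop) :
    ∀ {a b : ↥s} (_ : (G.induce s).Walk a b), P a → ¬ P b →
      ∃ c d : α, c ∈ s ∧ d ∈ s ∧ G.Adj c d ∧ P c ∧ ¬ P d := by
  intro a b q
  induction q with
  | nil => intro h1 h2; exact absurd h1 h2
  | @cons u v w hadj q ih =>
    intro h1 h2
    by_cases hPv : P v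
    · exact ih hPv h2
    · exact ⟨u, v, u.2, v.2, hadj, h1, hPv⟩

lemma separator {V : Type} [Fintype V] [DecidableEq V] {ι : Type} [Fintype ι] [DecidableEq ι]
    (G : SimpleGraph V) (t : ℕ) (T : SimpleGraph ι) (W : ι → Finset V)
    (hT : T.IsTree)
    (hedge : ∀ ⦃u v : V⦄, G.Adj u v → ∃ x, u ∈ W x ∧ v ∈ W x)
    (hconn : ∀ v : V, (T.induce {x | v ∈ W x}).Connected)
    (hbag : ∀ x, (W x).card ≤ t + 1)
    (m : ℕ) (hm : 1 ≤ m) (A : Finset V) :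
    ∃ X : Finset V, X ⊆ A ∧ X.card * (m + 1) ≤ (t + 1) * A.card ∧
      ∀ S : Finset V, S ⊆ A → (∀ v ∈ S, v ∉ X) →
        (G.induce (S : Set V)).Connected → S.card ≤ m := by
  classical
  have hne : Nonempty ι := (SimpleGraph.IsTree.isConnected hT).nonempty
  obtain ⟨r⟩ := hne
  -- shadow walks avoiding a node
  have shadow_walk : ∀ (x : ι) (v : V), v ∉ W x → ∀ {z z' : ι}, v ∈ W z → v ∈ W z' →
      ∃ p : T.Walk z z', x ∉ p.support := by
    intro x v hvx z z' hz hz'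
    obtain ⟨q⟩ := (hconn v).preconnected ⟨z, hz⟩ ⟨z', hz'⟩
    obtain ⟨p, hp⟩ := walk_of_induce_walk T {y | v ∈ W y} q
    exact ⟨p, fun hx => hvx (hp x hx)⟩
  suffices H : ∀ (n : ℕ) (A : Finset V), A.card ≤ n →
      ∃ X : Finset V, X ⊆ A ∧ X.card * (m + 1) ≤ (t + 1) * A.card ∧
      ∀ S : Finset V, S ⊆ A → (∀ v ∈ S, v ∉ X) →
        (G.induce (S : Set V)).Connected → S.card ≤ m by
    exact H A.card A le_rfl
  intro n
  induction n with
  | zero =>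
    intro A hA
    refine ⟨∅, Finset.empty_subset _, by simp, ?_⟩
    intro S hSA _ _
    have := Finset.card_le_card hSA
    omega
  | succ n ih =>
    intro A hAn
    by_cases hA : A.card ≤ m
    · refine ⟨∅, Finset.empty_subset _, by simp, ?_⟩
      intro S hSA _ _
      have := Finset.card_le_card hSA
      omega
    push_neg at hA
    -- the "below" predicate and weights
    set Pm : ι → V → Prop := fun x v => ∃ z, x ∈ (tpath hT r z).support ∧ v ∈ W z with hPm
    set Vfil : ι → Finset V := fun x => A.filter (fun v => Pm x v) with hVfil
    set Goods : Finset ι := Finset.univ.filter (fun x => m < (Vfil x).card) with hGoods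
    have hrG : r ∈ Goods := by
      rw [hGoods, Finset.mem_filter]
      refine ⟨Finset.mem_univ _, ?_⟩
      have : Vfil r = A := by
        rw [hVfil]
        apply Finset.filter_true_of_mem
        intro v _
        obtain ⟨⟨z, hz⟩⟩ := (hconn v).nonempty
        exact ⟨z, SimpleGraph.Walk.start_mem_support _, hz⟩
      rw [this]; exact hA
    obtain ⟨x, hxG, hxmax⟩ := Finset.exists_max_image Goods
      (fun y => (tpath hT r y).length) ⟨r, hrG⟩
    have hgood : m < (Vfil x).card := (Finset.mem_filter.mp hxG).2
    have hVsubA : Vfil x ⊆ A := Finset.filter_subset _ _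
    set A' : Finset V := A \ Vfil x with hA'
    have hA'card : A'.card + (Vfil x).card = A.card := by
      rw [hA']; rw [Finset.card_sdiff_of_subset hVsubA]
      have := Finset.card_le_card hVsubA
      omega
    obtain ⟨X', hX'sub, hX'card, hX'prop⟩ := ih A' (by omega)
    set X : Finset V := (W x ∩ A) ∪ X' with hX
    have hXA : X ⊆ A := by
      rw [hX]
      exact Finset.union_subset Finset.inter_subset_right
        (hX'sub.trans (Finset.sdiff_subset))
    refine ⟨X, hXA, ?_, ?_⟩
    · have h1 : X.card ≤ (t + 1) + X'.card := by
        calc X.card ≤ (W x ∩ A).card + X'.card := Finset.card_union_le _ _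
        _ ≤ (t + 1) + X'.card := by
            have : (W x ∩ A).card ≤ (W x).card :=
              Finset.card_le_card Finset.inter_subset_left
            have := hbag x; omega
      calc X.card * (m + 1) ≤ ((t + 1) + X'.card) * (m + 1) :=
            Nat.mul_le_mul_right _ h1
      _ = (t + 1) * (m + 1) + X'.card * (m + 1) := by ring
      _ ≤ (t + 1) * (m + 1) + (t + 1) * A'.card := by omega
      _ = (t + 1) * ((m + 1) + A'.card) := by ring
      _ ≤ (t + 1) * A.card := by
          have : (m + 1) + A'.card ≤ A.card := by omega
          exact Nat.mul_le_mul_left _ this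
    · intro S hSA hSX hSconn
      have hSWx : ∀ v ∈ S, v ∉ W x := by
        intro v hv hw
        apply hSX v hv
        rw [hX]
        exact Finset.mem_union_left _ (Finset.mem_inter.mpr ⟨hw, hSA hv⟩)
      have hSX' : ∀ v ∈ S, v ∉ X' := by
        intro v hv h
        apply hSX v hv
        rw [hX]
        exact Finset.mem_union_right _ h
      -- chain walks along S avoiding x
      have F3 : ∀ (a b : ↥(↑S : Set V)) (_ : (G.induce (↑S : Set V)).Walk a b)
          (za zb : ι), (a : V) ∈ W za → (b : V) ∈ W zb →
          ∃ p : T.Walk za zb, x ∉ p.support := by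
        intro a b q
        induction q with
        | nil =>
          intro za zb ha hb
          exact shadow_walk x _ (hSWx _ (Finset.mem_coe.mp (Subtype.mem _))) ha hb
        | @cons u v w hadj q ihq =>
          intro za zb ha hb
          have hG : G.Adj (u : V) (v : V) := hadj
          obtain ⟨zm, hma, hmc⟩ := hedge hG
          obtain ⟨p₁, hp₁⟩ := shadow_walk x _ (hSWx _ (Finset.mem_coe.mp u.2)) ha hma
          obtain ⟨p₂, hp₂⟩ := ihq zm zb hmc hb
          refine ⟨p₁.append p₂, ?_⟩
          rw [SimpleGraph.Walk.mem_support_append_iff]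
          tauto
      -- dichotomy
      have hcase : (∀ v ∈ S, Pm x v) ∨ (∀ v ∈ S, ¬ Pm x v) := by
        by_contra hcon
        push_neg at hcon
        obtain ⟨⟨w, hw, hPw⟩, ⟨u, hu, hPu⟩⟩ := hcon
        obtain ⟨q⟩ := hSconn.preconnected ⟨u, Finset.mem_coe.mpr hu⟩ ⟨w, Finset.mem_coe.mpr hw⟩
        obtain ⟨c, d, hc, hd, hcd, hPc, hPd⟩ := exists_crossing (Pm x) q hPu hPw
        obtain ⟨zc, hzcsup, hczc⟩ := hPc
        obtain ⟨zs, hczs, hdzs⟩ := hedge hcd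
        obtain ⟨p, hp⟩ := shadow_walk x c (hSWx c (Finset.mem_coe.mp hc)) hczs hczc
        exact hPd ⟨zs, below_of_avoid hT hzcsup p hp, hdzs⟩
      rcases hcase with hall | hnone
      · rcases Finset.eq_empty_or_nonempty S with rfl | ⟨s₀, hs₀⟩
        · simp
        · obtain ⟨z₀, hz₀sup, hs₀z₀⟩ := hall s₀ hs₀
          have hxz₀ : x ≠ z₀ := fun h => hSWx s₀ hs₀ (h ▸ hs₀z₀)
          obtain ⟨y₀, hadj₀, hy₀sup, ⟨w₀, hw₀⟩, hlen₀⟩ := exists_succ hT hz₀sup hxz₀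
          have hmain : ∀ v ∈ S, v ∈ Vfil y₀ := by
            intro v hv
            obtain ⟨z, hzsup, hvz⟩ := hall v hv
            have hxz : x ≠ z := fun h => hSWx v hv (h ▸ hvz)
            obtain ⟨y, hadj, hysup, ⟨wv, hwv⟩, hlen⟩ := exists_succ hT hzsup hxz
            obtain ⟨qS⟩ := hSconn.preconnected ⟨v, Finset.mem_coe.mpr hv⟩
              ⟨s₀, Finset.mem_coe.mpr hs₀⟩
            obtain ⟨pz, hpz⟩ := F3 _ _ qS z z₀ hvz hs₀z₀
            have hyy : y = y₀ := by
              refine succ_unique hT hadj hadj₀ (wv.append (pz.append w₀.reverse)) ?_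
              simp only [SimpleGraph.Walk.mem_support_append_iff,
                SimpleGraph.Walk.support_reverse, List.mem_reverse]
              tauto
            rw [hVfil]
            exact Finset.mem_filter.mpr ⟨hSA hv, ⟨z, hyy ▸ hysup, hvz⟩⟩
          have hnotgood : ¬ (m < (Vfil y₀).card) := by
            intro hg
            have hyG : y₀ ∈ Goods := Finset.mem_filter.mpr ⟨Finset.mem_univ _, hg⟩
            have := hxmax y₀ hyG
            omega
          have := Finset.card_le_card hmain
          omega
      · have hSA' : S ⊆ A' := by
          intro v hv
          rw [hA', Finset.mem_sdiff]
          refine ⟨hSA hv, fun hvf => hnone v hv ?_⟩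
          rw [hVfil] at hvf
          exact (Finset.mem_filter.mp hvf).2
        exact hX'prop S hSA' hSX' hSconn

end TWProof

namespace TWProof

lemma exists_finite_td {V : Type} [Fintype V] (G : SimpleGraph V) (t : ℕ)
    (h : TreewidthLE G t) :
    ∃ (ι : Type) (_ : Fintype ι) (T : SimpleGraph ι) (W : ι → Finset V),
      T.IsTree ∧ (∀ ⦃u v : V⦄, G.Adj u v → ∃ x, u ∈ W x ∧ v ∈ W x) ∧
      (∀ v : V, (T.induce {x | v ∈ W x}).Connected) ∧ (∀ x, (W x).card ≤ t + 1) := by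
  classical
  obtain ⟨ι, T, W, hT, hedge, hconn, hcard⟩ := h
  by_cases hV : Nonempty V
  · obtain ⟨v₀⟩ := hV
    have hne : Nonempty ι := hT.isConnected.nonempty
    obtain ⟨r⟩ := hne
    set g : V × V → ι := fun p =>
      if h : ∃ x, p.1 ∈ W x ∧ p.2 ∈ W x then h.choose else r with hgdef
    have hg : ∀ (p : V × V) (h : ∃ x, p.1 ∈ W x ∧ p.2 ∈ W x),
        p.1 ∈ W (g p) ∧ p.2 ∈ W (g p) := by
      intro p h
      rw [hgdef]
      simp only [dif_pos h]
      exact h.choose_spec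
    set N : Set ι := ⋃ (p : V × V), {y | y ∈ (tpath hT r (g p)).support} with hNdef
    have hNfin : N.Finite :=
      Set.finite_iUnion (fun p => (tpath hT r (g p)).support.finite_toSet)
    haveI : Fintype ↥N := hNfin.fintype
    have hmemN : ∀ (p : V × V) (y : ι), y ∈ (tpath hT r (g p)).support → y ∈ N := by
      intro p y hy
      rw [hNdef]
      exact Set.mem_iUnion.mpr ⟨p, hy⟩
    have hrN : r ∈ N := hmemN (v₀, v₀) r (SimpleGraph.Walk.start_mem_support _)
    -- reach r within N
    have hreachr : ∀ (y : ι) (hy : y ∈ N),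
        (T.induce N).Reachable ⟨r, hrN⟩ ⟨y, hy⟩ := by
      intro y hy
      rw [hNdef] at hy
      obtain ⟨p, hp⟩ := Set.mem_iUnion.mp hy
      have hsub : ∀ z ∈ ((tpath hT r (g p)).takeUntil y hp).support, z ∈ N := by
        intro z hz
        exact hmemN p z ((tpath hT r (g p)).support_takeUntil_subset hp hz)
      obtain ⟨q, _⟩ := induce_walk_of_walk T N _ hsub
      exact ⟨q⟩
    have hTree : (T.induce N).IsTree := by
      constructor
      · rw [SimpleGraph.connected_iff]
        refine ⟨?_, ⟨⟨r, hrN⟩⟩⟩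
        intro a b
        exact ((hreachr a.1 a.2).symm.trans (hreachr b.1 b.2)).elim
          (fun w => ⟨w.copy (Subtype.ext rfl) (Subtype.ext rfl)⟩)
      · intro v c hc
        exact hT.IsAcyclic (c.map (induceHomVal T N))
          ((SimpleGraph.Walk.map_isCycle_iff_of_injective (Subtype.val_injective)).mpr hc)
    refine ⟨↥N, inferInstance, T.induce N, fun y => W y.1, hTree, ?_, ?_, fun y => hcard y.1⟩
    · intro u v huv
      have hex : ∃ x, u ∈ W x ∧ v ∈ W x := hedge huv
      have hx := hg (u, v) hex
      exact ⟨⟨g (u, v), hmemN (u, v) _ (SimpleGraph.Walk.end_mem_support _)⟩, hx.1, hx.2⟩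
    · intro v
      have hex : ∃ x, v ∈ W x ∧ v ∈ W x := by
        obtain ⟨⟨z, hz⟩⟩ := (hconn v).nonempty
        exact ⟨z, hz, hz⟩
      have hgv := (hg (v, v) hex).1
      have hgvN : g (v, v) ∈ N := hmemN (v, v) _ (SimpleGraph.Walk.end_mem_support _)
      rw [SimpleGraph.connected_iff]
      constructor
      · rintro ⟨⟨y, hyN⟩, hyv⟩ ⟨⟨y', hyN'⟩, hyv'⟩
        -- a path from y to y' inside the shadow of v
        obtain ⟨qv⟩ := (hconn v).preconnected ⟨y, hyv⟩ ⟨y', hyv'⟩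
        obtain ⟨p1, hp1⟩ := walk_of_induce_walk T {z | v ∈ W z} qv
        -- a walk from y to y' inside N
        obtain ⟨w1⟩ := hreachr y hyN
        obtain ⟨w2⟩ := hreachr y' hyN'
        obtain ⟨p2', hp2'⟩ := walk_of_induce_walk T N (w1.reverse.append w2)
        -- both bypasses are THE path, hence support in the intersection
        have hP : (p1.bypass).IsPath := p1.bypass_isPath
        have hP2 : (p2'.bypass).IsPath := p2'.bypass_isPath
        have heq : p1.bypass = p2'.bypass :=
          congrArg Subtype.val (hT.IsAcyclic.path_unique ⟨p1.bypass, hP⟩ ⟨p2'.bypass, hP2⟩)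
        have hsupN : ∀ z ∈ p1.bypass.support, z ∈ N := by
          intro z hz
          rw [heq] at hz
          exact hp2' z (p2'.support_bypass_subset hz)
        have hsupv : ∀ z ∈ p1.bypass.support, v ∈ W z := by
          intro z hz
          exact hp1 z (p1.support_bypass_subset hz)
        obtain ⟨q, hq⟩ := induce_walk_of_walk T N p1.bypass hsupN
        have hqv : ∀ el ∈ q.support, el ∈ {y : ↥N | v ∈ W y.1} := by
          intro el hel
          exact hsupv el.1 (hq el hel)
        obtain ⟨q2, _⟩ := induce_walk_of_walk (T.induce N) {y : ↥N | v ∈ W y.1} q hqv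
        exact ⟨q2.copy (Subtype.ext (Subtype.ext rfl)) (Subtype.ext (Subtype.ext rfl))⟩
      · exact ⟨⟨⟨g (v, v), hgvN⟩, hgv⟩⟩
  · refine ⟨PUnit, inferInstance, ⊥, fun _ => ∅, ?_, ?_, ?_, by simp⟩
    · constructor
      · rw [SimpleGraph.connected_iff]
        refine ⟨fun a b => ?_, ⟨PUnit.unit⟩⟩
        rw [Subsingleton.elim a b]
      · intro v c hc
        cases c with
        | nil => exact hc.ne_nil rfl
        | cons h p => exact h
    · intro u v huv
      exact (hV ⟨u⟩).elim
    · intro v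
      exact (hV ⟨v⟩).elim

end TWProof

namespace TWProof

lemma clustering {V : Type} [Fintype V] [DecidableEq V] (G : SimpleGraph V) (t : ℕ)
    (h : TreewidthLE G t) (s : ℕ) :
    ∀ A : Finset V, ∃ f : V → Fin (s + 1),
      ∀ S : Finset V, S ⊆ A → (∀ u ∈ S, ∀ v ∈ S, f u = f v) →
        (G.induce (S : Set V)).Connected →
        (S.card : ℝ) ≤ ((t : ℝ) + 1) ^ ((s : ℝ) / ((s : ℝ) + 1)) *
          (A.card : ℝ) ^ (1 / ((s : ℝ) + 1)) := by
  classical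
  obtain ⟨ι, hfin, T, W, hT, hedge, hconn, hbag⟩ := exists_finite_td G t h
  haveI := hfin
  induction s with
  | zero =>
    intro A
    refine ⟨fun _ => 0, ?_⟩
    intro S hSA _ _
    have h1 : (S.card : ℝ) ≤ (A.card : ℝ) := by exact_mod_cast Finset.card_le_card hSA
    calc (S.card : ℝ) ≤ (A.card : ℝ) := h1
    _ = ((t : ℝ) + 1) ^ ((0 : ℕ) / ((0 : ℕ) + 1) : ℝ) * (A.card : ℝ) ^ (1 / (((0:ℕ) : ℝ) + 1)) := by
        norm_num
  | succ s ihs =>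
    intro A
    by_cases hA0 : A.card = 0
    · refine ⟨fun _ => 0, ?_⟩
      intro S hSA _ _
      have hS0 : S.card = 0 := by
        have := Finset.card_le_card hSA; omega
      rw [hS0]
      push_cast
      positivity
    · have hA1 : 1 ≤ A.card := Nat.one_le_iff_ne_zero.mpr hA0
      have ha : (0 : ℝ) < (t : ℝ) + 1 := by positivity
      have ha1 : (1 : ℝ) ≤ (t : ℝ) + 1 := by
        have : (0:ℝ) ≤ (t:ℝ) := Nat.cast_nonneg t
        linarith
      have hn : (0 : ℝ) < (A.card : ℝ) := by exact_mod_cast hA1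
      have hn1 : (1 : ℝ) ≤ (A.card : ℝ) := by exact_mod_cast hA1
      set p : ℝ := ((s : ℝ) + 1) / ((s : ℝ) + 2) with hp
      set q : ℝ := 1 / ((s : ℝ) + 2) with hq
      have hppos : 0 ≤ p := by rw [hp]; positivity
      have hqpos : 0 ≤ q := by rw [hq]; positivity
      set b : ℝ := ((t : ℝ) + 1) ^ p * (A.card : ℝ) ^ q with hb
      have hbpos : (0 : ℝ) < b := by rw [hb]; positivity
      have hb1 : (1 : ℝ) ≤ b := by
        rw [hb]
        have h1 : (1 : ℝ) ≤ ((t : ℝ) + 1) ^ p := Real.one_le_rpow ha1 hppos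
        have h2 : (1 : ℝ) ≤ (A.card : ℝ) ^ q := Real.one_le_rpow hn1 hqpos
        nlinarith
      set m : ℕ := ⌊b⌋₊ with hm
      have hm1 : 1 ≤ m := by
        rw [hm]
        exact Nat.le_floor (by exact_mod_cast hb1)
      obtain ⟨X, hXA, hXcard, hXprop⟩ := separator G t T W hT hedge hconn hbag m hm1 A
      obtain ⟨f', hf'⟩ := ihs X
      refine ⟨fun v => if v ∈ X then (f' v).castSucc else Fin.last (s + 1), ?_⟩
      intro S hSA hmono hconnS
      -- the target is b, after cast normalization
      have htarget : ((t : ℝ) + 1) ^ (((s:ℕ)+1 : ℕ) / (((s:ℕ)+1 : ℕ) + 1) : ℝ) *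
          (A.card : ℝ) ^ (1 / ((((s:ℕ)+1 : ℕ)) + 1 : ℝ)) = b := by
        rw [hb, hp, hq]
        push_cast
        ring_nf
      rcases Finset.eq_empty_or_nonempty S with rfl | ⟨v₀, hv₀⟩
      · simp only [Finset.card_empty, Nat.cast_zero]
        positivity
      by_cases hv₀X : v₀ ∈ X
      · have hSX : ∀ v ∈ S, v ∈ X := by
          intro v hv
          by_contra hvX
          have h1 := hmono v hv v₀ hv₀
          simp only [if_neg hvX, if_pos hv₀X] at h1
          exact absurd h1.symm (Fin.castSucc_lt_last _).ne
        have hmono' : ∀ u ∈ S, ∀ v ∈ S, f' u = f' v := by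
          intro u hu v hv
          have h1 := hmono u hu v hv
          simp only [if_pos (hSX u hu), if_pos (hSX v hv)] at h1
          exact Fin.castSucc_injective _ h1
        have hbound := hf' S (fun v hv => hSX v hv) hmono' hconnS
        have hXr : (X.card : ℝ) ≤ ((t : ℝ) + 1) * (A.card : ℝ) / b := by
          rw [le_div_iff₀ hbpos]
          have h2 : b ≤ (m : ℝ) + 1 := le_of_lt (Nat.lt_floor_add_one b)
          calc (X.card : ℝ) * b ≤ (X.card : ℝ) * ((m : ℝ) + 1) :=
                mul_le_mul_of_nonneg_left h2 (by positivity)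
          _ ≤ ((t : ℝ) + 1) * (A.card : ℝ) := by exact_mod_cast hXcard
        have hdiv : ((t : ℝ) + 1) * (A.card : ℝ) / b =
            ((t : ℝ) + 1) ^ q * (A.card : ℝ) ^ p := by
          rw [div_eq_iff (ne_of_gt hbpos), hb]
          have e1 : ((t:ℝ)+1) ^ q * ((t:ℝ)+1) ^ p = ((t:ℝ)+1) ^ (q + p) :=
            (Real.rpow_add ha q p).symm
          have e2 : (A.card:ℝ) ^ p * (A.card:ℝ) ^ q = (A.card:ℝ) ^ (p + q) :=
            (Real.rpow_add hn p q).symm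
          have hqp : q + p = 1 := by
            have hs2 : (s:ℝ) + 2 ≠ 0 := by positivity
            rw [hp, hq]
            field_simp
            ring
          calc ((t:ℝ)+1) * (A.card:ℝ)
              = (((t:ℝ)+1) ^ q * ((t:ℝ)+1) ^ p) * ((A.card:ℝ) ^ p * (A.card:ℝ) ^ q) := by
                rw [e1, e2, hqp, add_comm p q, hqp, Real.rpow_one, Real.rpow_one]
          _ = ((t:ℝ)+1) ^ q * (A.card:ℝ) ^ p * (((t:ℝ)+1) ^ p * (A.card:ℝ) ^ q) := by ring
        rw [htarget]
        calc (S.card : ℝ) ≤ ((t:ℝ)+1) ^ ((s:ℝ)/((s:ℝ)+1)) * (X.card:ℝ) ^ (1/((s:ℝ)+1)) :=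
              hbound
        _ ≤ ((t:ℝ)+1) ^ ((s:ℝ)/((s:ℝ)+1)) *
              (((t:ℝ)+1) ^ q * (A.card:ℝ) ^ p) ^ (1/((s:ℝ)+1)) := by
            rw [← hdiv]
            exact mul_le_mul_of_nonneg_left
              (Real.rpow_le_rpow (by positivity) hXr (by positivity)) (by positivity)
        _ = b := by
            have hs1 : (s:ℝ) + 1 ≠ 0 := by positivity
            have hs2 : (s:ℝ) + 2 ≠ 0 := by positivity
            rw [Real.mul_rpow (by positivity) (by positivity),
              ← Real.rpow_mul (le_of_lt ha), ← Real.rpow_mul (le_of_lt hn),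
              ← mul_assoc, ← Real.rpow_add ha, hb, hp, hq]
            congr 1
            · congr 1
              field_simp
              ring
            · congr 1
              field_simp
      · have hSX : ∀ v ∈ S, v ∉ X := by
          intro v hv hvX
          have h1 := hmono v hv v₀ hv₀
          simp only [if_pos hvX, if_neg hv₀X] at h1
          exact absurd h1 (Fin.castSucc_lt_last _).ne
        have hcard := hXprop S hSA hSX hconnS
        rw [htarget]
        calc (S.card : ℝ) ≤ (m : ℝ) := by exact_mod_cast hcard
        _ ≤ b := Nat.floor_le (le_of_lt hbpos)

end TWProof

namespace TWProof

lemma proj_fst_reachable {V₁ V₂ : Type} (H₁ : SimpleGraph V₁) (H₂ : SimpleGraph V₂)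
    (s : Set (V₁ × V₂)) :
    ∀ {a b : ↥s} (_ : ((StrongProd H₁ H₂).induce s).Walk a b),
      (H₁.induce (Prod.fst '' s)).Reachable ⟨a.1.1, ⟨a.1, a.2, rfl⟩⟩ ⟨b.1.1, ⟨b.1, b.2, rfl⟩⟩ := by
  intro a b q
  induction q with
  | nil => exact SimpleGraph.Reachable.refl _
  | @cons u v w hadj q ih =>
    have hcase : (u.1.1 = v.1.1) ∨ H₁.Adj u.1.1 v.1.1 := by
      rcases (hadj : (StrongProd H₁ H₂).Adj u.1 v.1) with ⟨h1, _⟩ | ⟨_, h1⟩ | ⟨h1, _⟩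
      · exact Or.inl h1
      · exact Or.inr h1
      · exact Or.inr h1
    rcases hcase with heq | hadj1
    · have heq2 : (⟨u.1.1, ⟨u.1, u.2, rfl⟩⟩ : ↥(Prod.fst '' s)) = ⟨v.1.1, ⟨v.1, v.2, rfl⟩⟩ :=
        Subtype.ext heq
      rw [heq2]
      exact ih
    · exact (SimpleGraph.Adj.reachable
        (show (H₁.induce (Prod.fst '' s)).Adj ⟨u.1.1, ⟨u.1, u.2, rfl⟩⟩
          ⟨v.1.1, ⟨v.1, v.2, rfl⟩⟩ from hadj1)).trans ih

lemma proj_snd_reachable {V₁ V₂ : Type} (H₁ : SimpleGraph V₁) (H₂ : SimpleGraph V₂)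
    (s : Set (V₁ × V₂)) :
    ∀ {a b : ↥s} (_ : ((StrongProd H₁ H₂).induce s).Walk a b),
      (H₂.induce (Prod.snd '' s)).Reachable ⟨a.1.2, ⟨a.1, a.2, rfl⟩⟩ ⟨b.1.2, ⟨b.1, b.2, rfl⟩⟩ := by
  intro a b q
  induction q with
  | nil => exact SimpleGraph.Reachable.refl _
  | @cons u v w hadj q ih =>
    have hcase : (u.1.2 = v.1.2) ∨ H₂.Adj u.1.2 v.1.2 := by
      rcases (hadj : (StrongProd H₁ H₂).Adj u.1 v.1) with ⟨_, h1⟩ | ⟨h1, _⟩ | ⟨_, h1⟩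
      · exact Or.inr h1
      · exact Or.inl h1
      · exact Or.inr h1
    rcases hcase with heq | hadj1
    · have heq2 : (⟨u.1.2, ⟨u.1, u.2, rfl⟩⟩ : ↥(Prod.snd '' s)) = ⟨v.1.2, ⟨v.1, v.2, rfl⟩⟩ :=
        Subtype.ext heq
      rw [heq2]
      exact ih
    · exact (SimpleGraph.Adj.reachable
        (show (H₂.induce (Prod.snd '' s)).Adj ⟨u.1.2, ⟨u.1, u.2, rfl⟩⟩
          ⟨v.1.2, ⟨v.1, v.2, rfl⟩⟩ from hadj1)).trans ih

end TWProof

/-- For graphs `H₁, H₂` of treewidth at most `t`, the strong product has a `c`-colouring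
with every monochromatic component of size at most
`(t+1)^{2(1−1/√c)} · |V|^{1/⌊√c⌋}`. -/
theorem general_upper (c t : ℕ) (hc : 1 ≤ c) (ht : 1 ≤ t) {V₁ V₂ : Type}
    [Fintype V₁] [Fintype V₂] (H₁ : SimpleGraph V₁) (H₂ : SimpleGraph V₂)
    (h₁ : TreewidthLE H₁ t) (h₂ : TreewidthLE H₂ t) :
    ∃ f : V₁ × V₂ → Fin c, ClusterLEReal (StrongProd H₁ H₂) f
      (((t : ℝ) + 1) ^ ((2 : ℝ) * (1 - 1 / Real.sqrt (c : ℝ))) *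
        (Fintype.card (V₁ × V₂) : ℝ) ^ ((1 : ℝ) / (Nat.sqrt c : ℝ))) := by
  classical
  obtain ⟨s', hs'⟩ : ∃ s', Nat.sqrt c = s' + 1 := by
    have hpos : 0 < Nat.sqrt c := Nat.sqrt_pos.mpr hc
    exact ⟨Nat.sqrt c - 1, by omega⟩
  have hss : (s' + 1) * (s' + 1) ≤ c := by
    have h := Nat.sqrt_le c
    rw [hs'] at h
    exact h
  obtain ⟨f₁, hf₁⟩ := TWProof.clustering H₁ t h₁ s' Finset.univ
  obtain ⟨f₂, hf₂⟩ := TWProof.clustering H₂ t h₂ s' Finset.univ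
  refine ⟨fun x => Fin.castLE hss (finProdFinEquiv (f₁ x.1, f₂ x.2)), ?_⟩
  intro S hmono hconnS
  set S₁ := S.image Prod.fst with hS₁
  set S₂ := S.image Prod.snd with hS₂
  have hfeq : ∀ x ∈ S, ∀ y ∈ S, f₁ x.1 = f₁ y.1 ∧ f₂ x.2 = f₂ y.2 := by
    intro x hx y hy
    have h1 := hmono x hx y hy
    have h2 : finProdFinEquiv (f₁ x.1, f₂ x.2) = finProdFinEquiv (f₁ y.1, f₂ y.2) :=
      Fin.castLE_injective hss h1
    have h3 := finProdFinEquiv.injective h2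
    exact ⟨congrArg Prod.fst h3, congrArg Prod.snd h3⟩
  have hmono₁ : ∀ u ∈ S₁, ∀ v ∈ S₁, f₁ u = f₁ v := by
    intro u hu v hv
    obtain ⟨x, hx, rfl⟩ := Finset.mem_image.mp hu
    obtain ⟨y, hy, rfl⟩ := Finset.mem_image.mp hv
    exact (hfeq x hx y hy).1
  have hmono₂ : ∀ u ∈ S₂, ∀ v ∈ S₂, f₂ u = f₂ v := by
    intro u hu v hv
    obtain ⟨x, hx, rfl⟩ := Finset.mem_image.mp hu
    obtain ⟨y, hy, rfl⟩ := Finset.mem_image.mp hv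
    exact (hfeq x hx y hy).2
  obtain ⟨⟨x₀, hx₀⟩⟩ := hconnS.nonempty
  have hconn₁ : (H₁.induce (↑S₁ : Set V₁)).Connected := by
    rw [show (↑S₁ : Set V₁) = Prod.fst '' (↑S : Set (V₁ × V₂)) by
      rw [hS₁, Finset.coe_image]]
    rw [SimpleGraph.connected_iff]
    refine ⟨?_, ⟨⟨x₀.1, ⟨x₀, hx₀, rfl⟩⟩⟩⟩
    intro a b
    obtain ⟨x, hx, hxa⟩ := a.2
    obtain ⟨y, hy, hyb⟩ := b.2
    obtain ⟨q⟩ := hconnS.preconnected ⟨x, hx⟩ ⟨y, hy⟩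
    have h := TWProof.proj_fst_reachable H₁ H₂ (↑S : Set (V₁ × V₂)) q
    have ha2 : a = ⟨x.1, ⟨x, hx, rfl⟩⟩ := Subtype.ext hxa.symm
    have hb2 : b = ⟨y.1, ⟨y, hy, rfl⟩⟩ := Subtype.ext hyb.symm
    rw [ha2, hb2]
    exact h
  have hconn₂ : (H₂.induce (↑S₂ : Set V₂)).Connected := by
    rw [show (↑S₂ : Set V₂) = Prod.snd '' (↑S : Set (V₁ × V₂)) by
      rw [hS₂, Finset.coe_image]]
    rw [SimpleGraph.connected_iff]
    refine ⟨?_, ⟨⟨x₀.2, ⟨x₀, hx₀, rfl⟩⟩⟩⟩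
    intro a b
    obtain ⟨x, hx, hxa⟩ := a.2
    obtain ⟨y, hy, hyb⟩ := b.2
    obtain ⟨q⟩ := hconnS.preconnected ⟨x, hx⟩ ⟨y, hy⟩
    have h := TWProof.proj_snd_reachable H₁ H₂ (↑S : Set (V₁ × V₂)) q
    have ha2 : a = ⟨x.2, ⟨x, hx, rfl⟩⟩ := Subtype.ext hxa.symm
    have hb2 : b = ⟨y.2, ⟨y, hy, rfl⟩⟩ := Subtype.ext hyb.symm
    rw [ha2, hb2]
    exact h
  have hb₁ := hf₁ S₁ (Finset.subset_univ _) hmono₁ hconn₁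
  have hb₂ := hf₂ S₂ (Finset.subset_univ _) hmono₂ hconn₂
  rw [Finset.card_univ] at hb₁ hb₂
  -- combine
  have hsub : S ⊆ S₁ ×ˢ S₂ := by
    intro x hx
    exact Finset.mem_product.mpr ⟨Finset.mem_image_of_mem _ hx, Finset.mem_image_of_mem _ hx⟩
  have hcard : (S.card : ℝ) ≤ (S₁.card : ℝ) * (S₂.card : ℝ) := by
    have := (Finset.card_le_card hsub).trans_eq (Finset.card_product S₁ S₂)
    exact_mod_cast this
  set a : ℝ := (t : ℝ) + 1 with hadef
  set e : ℝ := (s' : ℝ) / ((s' : ℝ) + 1) with hedef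
  set r : ℝ := 1 / ((s' : ℝ) + 1) with hrdef
  set n₁ : ℝ := (Fintype.card V₁ : ℝ) with hn₁
  set n₂ : ℝ := (Fintype.card V₂ : ℝ) with hn₂
  have ha : (0 : ℝ) < a := by rw [hadef]; positivity
  have ha1 : (1 : ℝ) ≤ a := by
    rw [hadef]
    have : (0:ℝ) ≤ (t:ℝ) := Nat.cast_nonneg t
    linarith
  have hn₁0 : (0:ℝ) ≤ n₁ := by rw [hn₁]; positivity
  have hn₂0 : (0:ℝ) ≤ n₂ := by rw [hn₂]; positivity
  have hcpos : (0:ℝ) < (c:ℝ) := by exact_mod_cast hc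
  have hsle : ((s' : ℝ) + 1) ≤ Real.sqrt (c : ℝ) := by
    rw [show ((s':ℝ)+1) = ((s'+1 : ℕ) : ℝ) by push_cast; ring]
    rw [Real.le_sqrt (by positivity) (le_of_lt hcpos)]
    rw [sq]
    exact_mod_cast hss
  have hexp : e + e ≤ 2 * (1 - 1 / Real.sqrt (c:ℝ)) := by
    have hsqpos : (0:ℝ) < Real.sqrt (c:ℝ) := lt_of_lt_of_le (by positivity) hsle
    have h1 : 1 / Real.sqrt (c:ℝ) ≤ 1 / ((s':ℝ)+1) :=
      one_div_le_one_div_of_le (by positivity) hsle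
    have h2 : e = 1 - 1 / ((s':ℝ)+1) := by
      rw [hedef]
      field_simp
      ring
    rw [h2]
    linarith
  calc (S.card : ℝ) ≤ (S₁.card : ℝ) * (S₂.card : ℝ) := hcard
  _ ≤ (a ^ e * n₁ ^ r) * (a ^ e * n₂ ^ r) := by
      apply mul_le_mul hb₁ hb₂ (by positivity) (by positivity)
  _ = a ^ (e + e) * (n₁ * n₂) ^ r := by
      rw [Real.rpow_add ha, Real.mul_rpow hn₁0 hn₂0]
      ring
  _ ≤ a ^ ((2:ℝ) * (1 - 1 / Real.sqrt (c:ℝ))) * (n₁ * n₂) ^ r :=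
      mul_le_mul_of_nonneg_right (Real.rpow_le_rpow_of_exponent_le ha1 hexp)
        (by positivity)
  _ = ((t : ℝ) + 1) ^ ((2 : ℝ) * (1 - 1 / Real.sqrt (c : ℝ))) *
        (Fintype.card (V₁ × V₂) : ℝ) ^ ((1 : ℝ) / (Nat.sqrt c : ℝ)) := by
      rw [hadef, hrdef, hn₁, hn₂]
      rw [show (Fintype.card (V₁ × V₂) : ℝ) = (Fintype.card V₁ : ℝ) * (Fintype.card V₂ : ℝ) by
        rw [Fintype.card_prod]; push_cast; ring]
      rw [hs']
      push_cast
      ring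
end

section
/- There exists an absolute constant δ > 0 (one may take δ = 48^{−2/3}) such that for all n ≥ 1, every 4-colouring of F_n ⊠ F_n has a monochromatic component with at least δ·n^{2/3} vertices. -/
open SimpleGraph
open Fin.NatCast

universe u v

section GraphAux
variable {V : Type u} {G : SimpleGraph V}

lemma induce_adj_aux {S : Set V} {a b : V} (ha : a ∈ S) (hb : b ∈ S) (h : G.Adj a b) :
    (G.induce S).Adj ⟨a, ha⟩ ⟨b, hb⟩ := by
  simpa using h

lemma connected_of_reach (S : Finset V) (v0 : V) (hv0 : v0 ∈ S)
    (hr : ∀ u (hu : u ∈ S), (G.induce (S : Set V)).Reachable ⟨u, hu⟩ ⟨v0, hv0⟩) :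
    (G.induce (S : Set V)).Connected := by
  haveI : Nonempty (S : Set V) := ⟨⟨v0, hv0⟩⟩
  refine ⟨fun a b => ?_⟩
  obtain ⟨a, ha⟩ := a
  obtain ⟨b, hb⟩ := b
  exact (hr a ha).trans (hr b hb).symm

lemma connected_of_hub (S : Finset V) (v0 : V) (hv0 : v0 ∈ S)
    (hadj : ∀ u ∈ S, u ≠ v0 → G.Adj u v0) : (G.induce (S : Set V)).Connected := by
  refine connected_of_reach S v0 hv0 (fun u hu => ?_)
  rcases eq_or_ne u v0 with rfl | hne
  · exact Reachable.refl _
  · exact (induce_adj_aux (Finset.mem_coe.mpr hu) (Finset.mem_coe.mpr hv0) (hadj u hu hne)).reachable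

lemma connected_of_two_hubs (S : Finset V) (v0 v1 : V) (hv0 : v0 ∈ S) (hv1 : v1 ∈ S)
    (h01 : G.Adj v0 v1)
    (hadj : ∀ u ∈ S, u = v0 ∨ u = v1 ∨ G.Adj u v0 ∨ G.Adj u v1) :
    (G.induce (S : Set V)).Connected := by
  refine connected_of_reach S v0 hv0 (fun u hu => ?_)
  have h10 : (G.induce (S : Set V)).Reachable ⟨v1, hv1⟩ ⟨v0, hv0⟩ :=
    (induce_adj_aux (Finset.mem_coe.mpr hv1) (Finset.mem_coe.mpr hv0) h01.symm).reachable
  rcases hadj u hu with rfl | rfl | h | h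
  · exact Reachable.refl _
  · exact h10
  · exact (induce_adj_aux (Finset.mem_coe.mpr hu) (Finset.mem_coe.mpr hv0) h).reachable
  · exact ((induce_adj_aux (Finset.mem_coe.mpr hu) (Finset.mem_coe.mpr hv1) h).reachable).trans h10

end GraphAux

section Fin4
lemma fin4_force (a b c d e₁ e₂ : Fin 4)
    (h : ¬ (({a, b, c, d} : Finset (Fin 4)).card ≤ 2))
    (h1 : e₁ ≠ a ∧ e₁ ≠ b ∧ e₁ ≠ c ∧ e₁ ≠ d)
    (h2 : e₂ ≠ a ∧ e₂ ≠ b ∧ e₂ ≠ c ∧ e₂ ≠ d) : e₁ = e₂ := by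
  have hA : 3 ≤ ({a, b, c, d} : Finset (Fin 4)).card := by omega
  have hsub : ({a, b, c, d} : Finset (Fin 4)) ⊆ Finset.univ := Finset.subset_univ _
  have hcompl : (Finset.univ \ ({a, b, c, d} : Finset (Fin 4))).card ≤ 1 := by
    rw [Finset.card_sdiff_of_subset hsub]
    simp only [Finset.card_univ, Fintype.card_fin]
    omega
  have m1 : e₁ ∈ Finset.univ \ ({a, b, c, d} : Finset (Fin 4)) := by
    simp only [Finset.mem_sdiff, Finset.mem_univ, true_and, Finset.mem_insert,
      Finset.mem_singleton]
    tauto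
  have m2 : e₂ ∈ Finset.univ \ ({a, b, c, d} : Finset (Fin 4)) := by
    simp only [Finset.mem_sdiff, Finset.mem_univ, true_and, Finset.mem_insert,
      Finset.mem_singleton]
    tauto
  exact Finset.card_le_one.mp hcompl e₁ m1 e₂ m2

lemma fin4_two (a b c d : Fin 4) (h : ({a, b, c, d} : Finset (Fin 4)).card ≤ 2) :
    b = a ∨ c = a ∨ d = a ∨ (b = c ∧ c = d ∧ b ≠ a) := by
  by_cases hba : b = a
  · exact Or.inl hba
  by_cases hca : c = a
  · exact Or.inr (Or.inl hca)
  by_cases hda : d = a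
  · exact Or.inr (Or.inr (Or.inl hda))
  refine Or.inr (Or.inr (Or.inr ⟨?_, ?_, hba⟩))
  · by_contra hbc
    have : ({a, b, c} : Finset (Fin 4)).card = 3 :=
      Finset.card_eq_three.mpr ⟨a, b, c, Ne.symm hba, Ne.symm hca, hbc, rfl⟩
    have hsub : ({a, b, c} : Finset (Fin 4)) ⊆ {a, b, c, d} := by
      intro x hx
      simp only [Finset.mem_insert, Finset.mem_singleton] at hx ⊢
      tauto
    have := Finset.card_le_card hsub
    omega
  · -- c = d
    by_cases hbc : b = c
    · by_contra hcd
      have : ({a, c, d} : Finset (Fin 4)).card = 3 :=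
        Finset.card_eq_three.mpr ⟨a, c, d, Ne.symm hca, Ne.symm hda, hcd, rfl⟩
      have hsub : ({a, c, d} : Finset (Fin 4)) ⊆ {a, b, c, d} := by
        intro x hx
        simp only [Finset.mem_insert, Finset.mem_singleton] at hx ⊢
        tauto
      have := Finset.card_le_card hsub
      omega
    · exfalso
      have : ({a, b, c} : Finset (Fin 4)).card = 3 :=
        Finset.card_eq_three.mpr ⟨a, b, c, Ne.symm hba, Ne.symm hca, hbc, rfl⟩
      have hsub : ({a, b, c} : Finset (Fin 4)) ⊆ {a, b, c, d} := by
        intro x hx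
        simp only [Finset.mem_insert, Finset.mem_singleton] at hx ⊢
        tauto
      have := Finset.card_le_card hsub
      omega
end Fin4


def cartAdj (p q : ℕ × ℕ) : Prop :=
  (p.1 = q.1 ∧ (p.2 + 1 = q.2 ∨ q.2 + 1 = p.2)) ∨
  (p.2 = q.2 ∧ (p.1 + 1 = q.1 ∨ q.1 + 1 = p.1))

lemma cartAdj_symm {p q : ℕ × ℕ} (h : cartAdj p q) : cartAdj q p := by
  unfold cartAdj at *; tauto

def ReachIn (T : Finset (ℕ × ℕ)) : ℕ × ℕ → ℕ × ℕ → Prop :=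
  Relation.ReflTransGen (fun a b => a ∈ T ∧ b ∈ T ∧ cartAdj a b)

lemma ReachIn.symm {T : Finset (ℕ × ℕ)} {p q : ℕ × ℕ} (h : ReachIn T p q) : ReachIn T q p := by
  refine (@Relation.ReflTransGen.stdSymm _ _ ⟨?_⟩).symm _ _ h
  intro a b hab
  exact ⟨hab.2.1, hab.1, cartAdj_symm hab.2.2⟩

/-- generic injection counting: if for each component `C` and each value `j` in the
projection of `C` there is an element of `C` projecting to `j` whose "step" lands in `S`,
then the sum of projection sizes is at most `|S|`. -/
lemma sum_proj_le (S : Finset (ℕ × ℕ)) (comps : Finset (Finset (ℕ × ℕ)))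
    (hdisj : ∀ C ∈ comps, ∀ D ∈ comps, C ≠ D → Disjoint C D)
    (π : ℕ × ℕ → ℕ) (st : ℕ × ℕ → ℕ × ℕ)
    (hstinj : ∀ p q : ℕ × ℕ, st p = st q → p = q)
    (hkey : ∀ C ∈ comps, ∀ j ∈ C.image π, ∃ p ∈ C, π p = j ∧ st p ∈ S) :
    (∑ C ∈ comps, (C.image π).card) ≤ S.card := by
  classical
  rw [← Finset.card_sigma]
  have hex : ∀ x : (_ : Finset (ℕ × ℕ)) × ℕ, x ∈ comps.sigma (fun C => C.image π) →
      ∃ p, p ∈ x.1 ∧ π p = x.2 ∧ st p ∈ S := by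
    intro x hx
    rw [Finset.mem_sigma] at hx
    obtain ⟨p, hp, h1, h2⟩ := hkey x.1 hx.1 x.2 hx.2
    exact ⟨p, hp, h1, h2⟩
  set φ : (_ : Finset (ℕ × ℕ)) × ℕ → ℕ × ℕ := fun x =>
    if h : ∃ p, p ∈ x.1 ∧ π p = x.2 ∧ st p ∈ S then st h.choose else (0, 0) with hφ
  apply Finset.card_le_card_of_injOn φ
  · intro x hx
    have h := hex x hx
    simp only [hφ, dif_pos h]
    exact h.choose_spec.2.2
  · intro x hx y hy hxy
    have h1 := hex x hx
    have h2 := hex y hy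
    simp only [hφ, dif_pos h1, dif_pos h2] at hxy
    have hpq := hstinj _ _ hxy
    obtain ⟨hp1, hp2, _⟩ := h1.choose_spec
    obtain ⟨hq1, hq2, _⟩ := h2.choose_spec
    rw [hpq] at hp1 hp2
    have hx' := Finset.mem_sigma.mp (Finset.mem_coe.mp hx)
    have hy' := Finset.mem_sigma.mp (Finset.mem_coe.mp hy)
    have hCD : x.1 = y.1 := by
      by_contra hne
      exact (Finset.disjoint_left.mp (hdisj x.1 hx'.1 y.1 hy'.1 hne) hp1) hq1
    have hj : x.2 = y.2 := hp2.symm.trans hq2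
    obtain ⟨C, j⟩ := x
    obtain ⟨D, j'⟩ := y
    simp only at hCD hj
    subst hCD
    subst hj
    rfl



lemma nat_le_of_sq_le_sq (a b : ℕ) (h : a * a ≤ b * b) : a ≤ b := by
  by_contra hab
  push_neg at hab
  have h2 : (b + 1) * (b + 1) ≤ a * a := Nat.mul_le_mul hab hab
  nlinarith

lemma four_mul_le_sq_add' (a b : ℕ) : 4 * (a * b) ≤ (a + b) * (a + b) := by
  zify
  nlinarith [sq_nonneg ((a : ℤ) - b)]

noncomputable instance reachDec (T : Finset (ℕ × ℕ)) (p : ℕ × ℕ) :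
    DecidablePred (ReachIn T p) := fun _ => Classical.propDecidable _

lemma grid_count (n k : ℕ) (S T : Finset (ℕ × ℕ))
    (hcover : Finset.Icc 1 n ×ˢ Finset.Icc 1 n ⊆ S ∪ T)
    (hTP : ∀ p ∈ T, 1 ≤ p.1 ∧ p.1 < n ∧ 1 ≤ p.2 ∧ p.2 < n)
    (hsize : ∀ p ∈ T, (T.filter (fun q => ReachIn T p q)).card ≤ k) :
    n * n ≤ (Nat.sqrt k + 2) * S.card := by
  classical
  set s := Nat.sqrt k with hs
  set comp : ℕ × ℕ → Finset (ℕ × ℕ) := fun p => T.filter (fun q => ReachIn T p q) with hcomp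
  set comps : Finset (Finset (ℕ × ℕ)) := T.image comp with hcomps
  have hmemself : ∀ p ∈ T, p ∈ comp p := fun p hp =>
    Finset.mem_filter.mpr ⟨hp, Relation.ReflTransGen.refl⟩
  have hcompsub : ∀ p, comp p ⊆ T := fun p => Finset.filter_subset _ _
  have hCsubT : ∀ C ∈ comps, C ⊆ T := by
    intro C hC
    obtain ⟨p, _, rfl⟩ := Finset.mem_image.mp hC
    exact hcompsub p
  have hcompeq : ∀ p q, q ∈ comp p → comp q = comp p := by
    intro p q hq
    rw [hcomp] at hq ⊢
    simp only [Finset.mem_filter] at hq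
    ext r
    simp only [Finset.mem_filter, and_congr_right_iff]
    intro _
    exact ⟨fun h => hq.2.trans h, fun h => (ReachIn.symm hq.2).trans h⟩
  have hdisj : ∀ C ∈ comps, ∀ D ∈ comps, C ≠ D → Disjoint C D := by
    intro C hC D hD hne
    obtain ⟨p, hp, rfl⟩ := Finset.mem_image.mp hC
    obtain ⟨q, hq, rfl⟩ := Finset.mem_image.mp hD
    rw [Finset.disjoint_left]
    intro r hr1 hr2
    exact hne ((hcompeq p r hr1).symm.trans (hcompeq q r hr2))
  have hTbiUnion : T = comps.biUnion (fun C => C) := by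
    ext p
    constructor
    · intro hp
      exact Finset.mem_biUnion.mpr ⟨comp p, Finset.mem_image_of_mem comp hp, hmemself p hp⟩
    · intro hp
      obtain ⟨C, hC, hpC⟩ := Finset.mem_biUnion.mp hp
      exact hCsubT C hC hpC
  have hcardT : T.card = ∑ C ∈ comps, C.card := by
    conv_lhs => rw [hTbiUnion]
    exact Finset.card_biUnion (fun C hC D hD h => hdisj C hC D hD h)
  have hclosure : ∀ C ∈ comps, ∀ q ∈ C, ∀ q', q' ∈ T → cartAdj q q' → q' ∈ C := by
    intro C hC q hq q' hT' hadj
    obtain ⟨p, hp, rfl⟩ := Finset.mem_image.mp hC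
    rw [hcomp] at hq ⊢
    simp only [Finset.mem_filter] at hq ⊢
    exact ⟨hT', hq.2.tail ⟨hcompsub p (by simpa [hcomp] using Finset.mem_filter.mpr hq), hT', hadj⟩⟩
  -- key witness for columns (step up)
  have hkeyc : ∀ C ∈ comps, ∀ j ∈ C.image Prod.snd, ∃ p ∈ C, p.2 = j ∧ (p.1 + 1, p.2) ∈ S := by
    intro C hC j hj
    obtain ⟨q0, hq0, hq0j⟩ := Finset.mem_image.mp hj
    set M : Finset (ℕ × ℕ) := C.filter (fun q => q.2 = j) with hM
    have hMne : M.Nonempty := ⟨q0, Finset.mem_filter.mpr ⟨hq0, hq0j⟩⟩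
    obtain ⟨q, hqM, hqsup⟩ := Finset.exists_mem_eq_sup M hMne Prod.fst
    rw [hM, Finset.mem_filter] at hqM
    refine ⟨q, hqM.1, hqM.2, ?_⟩
    have hqT : q ∈ T := hCsubT C hC hqM.1
    have hb := hTP q hqT
    have hmem : (q.1 + 1, q.2) ∈ Finset.Icc 1 n ×ˢ Finset.Icc 1 n := by
      rw [Finset.mem_product, Finset.mem_Icc, Finset.mem_Icc]
      omega
    have hnotT : (q.1 + 1, q.2) ∉ T := by
      intro h'
      have hin : (q.1 + 1, q.2) ∈ C :=
        hclosure C hC q hqM.1 _ h' (Or.inr ⟨rfl, Or.inl rfl⟩)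
      have hinM : (q.1 + 1, q.2) ∈ M := Finset.mem_filter.mpr ⟨hin, hqM.2⟩
      have := Finset.le_sup (f := Prod.fst) hinM
      rw [← hqsup] at this
      omega
    rcases Finset.mem_union.mp (hcover hmem) with h | h
    · exact h
    · exact absurd h hnotT
  -- key witness for rows (step right)
  have hkeyr : ∀ C ∈ comps, ∀ i ∈ C.image Prod.fst, ∃ p ∈ C, p.1 = i ∧ (p.1, p.2 + 1) ∈ S := by
    intro C hC i hi
    obtain ⟨q0, hq0, hq0i⟩ := Finset.mem_image.mp hi
    set M : Finset (ℕ × ℕ) := C.filter (fun q => q.1 = i) with hM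
    have hMne : M.Nonempty := ⟨q0, Finset.mem_filter.mpr ⟨hq0, hq0i⟩⟩
    obtain ⟨q, hqM, hqsup⟩ := Finset.exists_mem_eq_sup M hMne Prod.snd
    rw [hM, Finset.mem_filter] at hqM
    refine ⟨q, hqM.1, hqM.2, ?_⟩
    have hqT : q ∈ T := hCsubT C hC hqM.1
    have hb := hTP q hqT
    have hmem : (q.1, q.2 + 1) ∈ Finset.Icc 1 n ×ˢ Finset.Icc 1 n := by
      rw [Finset.mem_product, Finset.mem_Icc, Finset.mem_Icc]
      omega
    have hnotT : (q.1, q.2 + 1) ∉ T := by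
      intro h'
      have hin : (q.1, q.2 + 1) ∈ C :=
        hclosure C hC q hqM.1 _ h' (Or.inl ⟨rfl, Or.inl rfl⟩)
      have hinM : (q.1, q.2 + 1) ∈ M := Finset.mem_filter.mpr ⟨hin, hqM.2⟩
      have := Finset.le_sup (f := Prod.snd) hinM
      rw [← hqsup] at this
      omega
    rcases Finset.mem_union.mp (hcover hmem) with h | h
    · exact h
    · exact absurd h hnotT
  have hsumc : (∑ C ∈ comps, (C.image Prod.snd).card) ≤ S.card := by
    refine sum_proj_le S comps hdisj Prod.snd (fun p => (p.1 + 1, p.2)) ?_ hkeyc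
    intro p q h
    simp only [Prod.mk.injEq] at h
    exact Prod.ext (by omega) h.2
  have hsumr : (∑ C ∈ comps, (C.image Prod.fst).card) ≤ S.card := by
    refine sum_proj_le S comps hdisj Prod.fst (fun p => (p.1, p.2 + 1)) ?_ hkeyr
    intro p q h
    simp only [Prod.mk.injEq] at h
    exact Prod.ext h.1 (by omega)
  have h2C : ∀ C ∈ comps, 2 * C.card ≤
      (s + 1) * ((C.image Prod.fst).card + (C.image Prod.snd).card) := by
    intro C hC
    set r := (C.image Prod.fst).card
    set c := (C.image Prod.snd).card
    have hk1 : C.card ≤ k := by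
      obtain ⟨p, hp, rfl⟩ := Finset.mem_image.mp hC
      exact hsize p hp
    have hsub : C ⊆ (C.image Prod.fst) ×ˢ (C.image Prod.snd) := by
      intro q hq
      rw [Finset.mem_product]
      exact ⟨Finset.mem_image_of_mem _ hq, Finset.mem_image_of_mem _ hq⟩
    have hrc : C.card ≤ r * c := by
      have := Finset.card_le_card hsub
      rwa [Finset.card_product] at this
    have hks : k < (s + 1) * (s + 1) := Nat.lt_succ_sqrt k
    apply nat_le_of_sq_le_sq
    have e1 : C.card * C.card ≤ (r * c) * k := Nat.mul_le_mul hrc hk1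
    have e2 := four_mul_le_sq_add' r c
    nlinarith
  have hTcard : 2 * T.card ≤ (s + 1) * (S.card + S.card) := by
    calc 2 * T.card = ∑ C ∈ comps, 2 * C.card := by rw [hcardT, Finset.mul_sum]
    _ ≤ ∑ C ∈ comps, (s + 1) * ((C.image Prod.fst).card + (C.image Prod.snd).card) :=
        Finset.sum_le_sum h2C
    _ = (s + 1) * ((∑ C ∈ comps, (C.image Prod.fst).card) + (∑ C ∈ comps, (C.image Prod.snd).card)) := by
        rw [← Finset.mul_sum, Finset.sum_add_distrib]
    _ ≤ (s + 1) * (S.card + S.card) := Nat.mul_le_mul_left _ (by omega)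
  have hTle : T.card ≤ (s + 1) * S.card := by
    have : 2 * T.card ≤ 2 * ((s + 1) * S.card) := by
      calc 2 * T.card ≤ (s + 1) * (S.card + S.card) := hTcard
      _ = 2 * ((s + 1) * S.card) := by ring
    omega
  have hPcard : (Finset.Icc 1 n ×ˢ Finset.Icc 1 n).card = n * n := by
    rw [Finset.card_product, Nat.card_Icc]
    norm_num
  calc n * n = (Finset.Icc 1 n ×ˢ Finset.Icc 1 n).card := hPcard.symm
  _ ≤ (S ∪ T).card := Finset.card_le_card hcover
  _ ≤ S.card + T.card := Finset.card_union_le _ _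
  _ ≤ S.card + (s + 1) * S.card := by omega
  _ = (s + 2) * S.card := by ring

-- === fan / strong product adjacency ===
lemma fan_adj_zero {n : ℕ} {u : Fin (n+1)} (hu : u ≠ 0) : (Fan n).Adj 0 u := by
  rw [Fan, SimpleGraph.fromRel_adj]
  exact ⟨Ne.symm hu, Or.inl (Or.inl rfl)⟩

lemma fan_adj_succ {n : ℕ} {u v : Fin (n+1)} (h : (u : ℕ) + 1 = (v : ℕ)) : (Fan n).Adj u v := by
  rw [Fan, SimpleGraph.fromRel_adj]
  refine ⟨?_, Or.inl (Or.inr h)⟩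
  intro e
  rw [e] at h
  omega

abbrev SPG (n : ℕ) : SimpleGraph (Fin (n+1) × Fin (n+1)) := StrongProd (Fan n) (Fan n)

lemma strong_adj_hub0 {n : ℕ} {v : Fin (n+1) × Fin (n+1)} (hv : v ≠ (0, 0)) :
    (SPG n).Adj v (0, 0) := by
  obtain ⟨a, b⟩ := v
  by_cases ha : a = 0
  · subst ha
    have hb : b ≠ 0 := by
      intro h; exact hv (by rw [h])
    exact Or.inl ⟨rfl, (fan_adj_zero hb).symm⟩
  · by_cases hb : b = 0
    · subst hb
      exact Or.inr (Or.inl ⟨rfl, (fan_adj_zero ha).symm⟩)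
    · exact Or.inr (Or.inr ⟨(fan_adj_zero ha).symm, (fan_adj_zero hb).symm⟩)

-- === the ℕ-grid encoding ===
noncomputable section FanProof
open Finset

variable (n : ℕ) (f : Fin (n+1) × Fin (n+1) → Fin 4)

def iot (p : ℕ × ℕ) : Fin (n+1) × Fin (n+1) := ((p.1 : Fin (n+1)), (p.2 : Fin (n+1)))
def Fc (p : ℕ × ℕ) : Fin 4 := f (iot n p)
def c0c : Fin 4 := f (0, 0)
def cDom (j : ℕ) : Fin 4 := f (0, (j : Fin (n+1)))
def rDom (i : ℕ) : Fin 4 := f ((i : Fin (n+1)), 0)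
def gridP : Finset (ℕ × ℕ) := Finset.Icc 1 n ×ˢ Finset.Icc 1 n
def Bad1 (p : ℕ × ℕ) : Prop :=
  ({c0c n f, cDom n f (p.2+1), rDom n f p.1, rDom n f (p.1+1)} : Finset (Fin 4)).card ≤ 2
def Bad2 (p : ℕ × ℕ) : Prop :=
  ({c0c n f, cDom n f p.2, cDom n f (p.2+1), rDom n f (p.1+1)} : Finset (Fin 4)).card ≤ 2
def InSP (p : ℕ × ℕ) : Prop :=
  Fc n f p = c0c n f ∨ Fc n f p = cDom n f p.2 ∨ Fc n f p = cDom n f (p.2+1) ∨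
  Fc n f p = rDom n f p.1 ∨ Fc n f p = rDom n f (p.1+1) ∨ p.1 = n ∨ p.2 = n ∨
  Bad1 n f p ∨ Bad2 n f p
open Classical in
def Sb : Finset (ℕ × ℕ) := (gridP n).filter (fun p => InSP n f p)
open Classical in
def Tg : Finset (ℕ × ℕ) := (gridP n).filter (fun p => ¬ InSP n f p)

variable {n f}

lemma mem_gridP {p : ℕ × ℕ} : p ∈ gridP n ↔ (1 ≤ p.1 ∧ p.1 ≤ n ∧ 1 ≤ p.2 ∧ p.2 ≤ n) := by
  rw [gridP, Finset.mem_product, Finset.mem_Icc, Finset.mem_Icc]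
  tauto

lemma val_cast_le {m : ℕ} (h : m ≤ n) : ((m : Fin (n+1)) : ℕ) = m :=
  Fin.val_cast_of_lt (by omega)

lemma cast_np1 : ((n + 1 : ℕ) : Fin (n+1)) = 0 := by
  apply Fin.ext
  rw [Fin.val_natCast]
  simp

lemma cDom_np1 : cDom n f (n+1) = c0c n f := by
  rw [cDom, cast_np1]; rfl

lemma rDom_np1 : rDom n f (n+1) = c0c n f := by
  rw [rDom, cast_np1]; rfl

lemma cast_ne_zero' {m : ℕ} (h1 : 1 ≤ m) (h2 : m ≤ n) : (m : Fin (n+1)) ≠ 0 := by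
  intro e
  have := congrArg Fin.val e
  rw [val_cast_le h2] at this
  simp at this
  omega

lemma iot_fst_ne {p : ℕ × ℕ} (hp : p ∈ gridP n) : (iot n p).1 ≠ 0 := by
  have h := mem_gridP.mp hp
  exact cast_ne_zero' h.1 h.2.1

lemma iot_ne_00 {p : ℕ × ℕ} (hp : p ∈ gridP n) : iot n p ≠ (0, 0) := by
  intro e
  exact iot_fst_ne hp (by rw [e])

lemma iot_injOn {p q : ℕ × ℕ} (hp : p ∈ gridP n) (hq : q ∈ gridP n)
    (h : iot n p = iot n q) : p = q := by
  have h1 := congrArg (fun x => (Fin.val x.1, Fin.val x.2)) h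
  simp only [iot] at h1
  have hp' := mem_gridP.mp hp
  have hq' := mem_gridP.mp hq
  rw [val_cast_le hp'.2.1, val_cast_le hq'.2.1, val_cast_le hp'.2.2.2,
    val_cast_le hq'.2.2.2] at h1
  exact Prod.ext (congrArg Prod.fst h1) (congrArg Prod.snd h1)

section WithHk
variable {k : ℕ}
  (Hk : ∀ S : Finset (Fin (n+1) × Fin (n+1)), IsMonochromatic f S →
    ((SPG n).induce (S : Set (Fin (n+1) × Fin (n+1)))).Connected → S.card ≤ k)

include Hk

lemma star_bound (v0 : Fin (n+1) × Fin (n+1)) (A : Finset (Fin (n+1) × Fin (n+1)))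
    (hmono : ∀ u ∈ A, f u = f v0)
    (hadj : ∀ u ∈ A, u ≠ v0 → (SPG n).Adj u v0) : A.card ≤ k := by
  have h1 : (insert v0 A).card ≤ k := by
    apply Hk
    · intro u hu w hw
      have hu' : f u = f v0 := by
        rcases Finset.mem_insert.mp hu with rfl | h
        · rfl
        · exact hmono u h
      have hw' : f w = f v0 := by
        rcases Finset.mem_insert.mp hw with rfl | h
        · rfl
        · exact hmono w h
      rw [hu', hw']
    · apply connected_of_hub _ v0 (Finset.mem_insert_self _ _)
      intro u hu hne
      rcases Finset.mem_insert.mp hu with rfl | h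
      · exact absurd rfl hne
      · exact hadj u h hne
  exact le_trans (Finset.card_le_card (Finset.subset_insert _ _)) h1

lemma twohub_bound (v0 v1 : Fin (n+1) × Fin (n+1)) (h01 : (SPG n).Adj v0 v1)
    (A : Finset (Fin (n+1) × Fin (n+1)))
    (hmono : ∀ u ∈ A, f u = f v0) (hm1 : f v1 = f v0)
    (hadj : ∀ u ∈ A, u = v0 ∨ u = v1 ∨ (SPG n).Adj u v0 ∨ (SPG n).Adj u v1) :
    A.card ≤ k := by
  have h1 : (insert v0 (insert v1 A)).card ≤ k := by
    apply Hk
    · intro u hu w hw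
      have key : ∀ z ∈ insert v0 (insert v1 A), f z = f v0 := by
        intro z hz
        rcases Finset.mem_insert.mp hz with rfl | hz'
        · rfl
        · rcases Finset.mem_insert.mp hz' with rfl | hz''
          · exact hm1
          · exact hmono z hz''
      rw [key u hu, key w hw]
    · apply connected_of_two_hubs _ v0 v1 (Finset.mem_insert_self _ _)
        (Finset.mem_insert_of_mem (Finset.mem_insert_self _ _)) h01
      intro u hu
      rcases Finset.mem_insert.mp hu with rfl | hu'
      · exact Or.inl rfl
      · rcases Finset.mem_insert.mp hu' with rfl | hu''
        · exact Or.inr (Or.inl rfl)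
        · rcases hadj u hu'' with h | h | h | h
          · exact Or.inl h
          · exact Or.inr (Or.inl h)
          · exact Or.inr (Or.inr (Or.inl h))
          · exact Or.inr (Or.inr (Or.inr h))
  calc A.card ≤ (insert v1 A).card := Finset.card_le_card (Finset.subset_insert _ _)
  _ ≤ (insert v0 (insert v1 A)).card := Finset.card_le_card (Finset.subset_insert _ _)
  _ ≤ k := h1

/-- any monochromatic-with-`c0` subset of the grid has size at most `k` -/
lemma c0_bound (A : Finset (ℕ × ℕ)) (hsub : A ⊆ gridP n)
    (hprop : ∀ p ∈ A, Fc n f p = c0c n f) : A.card ≤ k := by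
  have hinj : Set.InjOn (iot n) A := fun p hp q hq h =>
    iot_injOn (hsub hp) (hsub hq) h
  rw [← Finset.card_image_of_injOn hinj]
  apply star_bound Hk (0, 0)
  · intro u hu
    obtain ⟨p, hp, rfl⟩ := Finset.mem_image.mp hu
    exact hprop p hp
  · intro u hu _
    obtain ⟨p, hp, rfl⟩ := Finset.mem_image.mp hu
    exact strong_adj_hub0 (iot_ne_00 (hsub hp))

/-- column star bound -/
lemma col_bound (j : ℕ) (hj : j ≤ n + 1) (A : Finset (ℕ × ℕ)) (hsub : A ⊆ gridP n)
    (hprop : ∀ p ∈ A, Fc n f p = cDom n f j ∧ (p.2 = j ∨ p.2 + 1 = j)) : A.card ≤ k := by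
  have hinj : Set.InjOn (iot n) A := fun p hp q hq h =>
    iot_injOn (hsub hp) (hsub hq) h
  rw [← Finset.card_image_of_injOn hinj]
  apply star_bound Hk (0, (j : Fin (n+1)))
  · intro u hu
    obtain ⟨p, hp, rfl⟩ := Finset.mem_image.mp hu
    exact (hprop p hp).1
  · intro u hu _
    obtain ⟨p, hp, rfl⟩ := Finset.mem_image.mp hu
    have hg := mem_gridP.mp (hsub hp)
    rcases (hprop p hp).2 with h2 | h2
    · -- same column
      exact Or.inr (Or.inl ⟨by rw [iot, h2], (fan_adj_zero (iot_fst_ne (hsub hp))).symm⟩)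
    · rcases Nat.lt_or_ge j (n+1) with hjn | hjn
      · -- j ≤ n : consecutive column
        refine Or.inr (Or.inr ⟨(fan_adj_zero (iot_fst_ne (hsub hp))).symm, ?_⟩)
        apply fan_adj_succ
        show ((p.2 : Fin (n+1)) : ℕ) + 1 = ((j : Fin (n+1)) : ℕ)
        rw [val_cast_le hg.2.2.2, val_cast_le (by omega : j ≤ n)]
        exact h2
      · -- j = n+1 : hub is (0,0)
        have hjeq : j = n + 1 := by omega
        subst hjeq
        rw [cast_np1]
        exact strong_adj_hub0 (iot_ne_00 (hsub hp))

/-- row star bound -/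
lemma row_bound (i : ℕ) (hi : i ≤ n + 1) (A : Finset (ℕ × ℕ)) (hsub : A ⊆ gridP n)
    (hprop : ∀ p ∈ A, Fc n f p = rDom n f i ∧ (p.1 = i ∨ p.1 + 1 = i)) : A.card ≤ k := by
  have hinj : Set.InjOn (iot n) A := fun p hp q hq h =>
    iot_injOn (hsub hp) (hsub hq) h
  rw [← Finset.card_image_of_injOn hinj]
  apply star_bound Hk ((i : Fin (n+1)), 0)
  · intro u hu
    obtain ⟨p, hp, rfl⟩ := Finset.mem_image.mp hu
    exact (hprop p hp).1
  · intro u hu _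
    obtain ⟨p, hp, rfl⟩ := Finset.mem_image.mp hu
    have hg := mem_gridP.mp (hsub hp)
    have hsnd : (iot n p).2 ≠ 0 := cast_ne_zero' hg.2.2.1 hg.2.2.2
    rcases (hprop p hp).2 with h2 | h2
    · exact Or.inl ⟨by rw [iot, h2], (fan_adj_zero hsnd).symm⟩
    · rcases Nat.lt_or_ge i (n+1) with hin | hin
      · refine Or.inr (Or.inr ⟨?_, (fan_adj_zero hsnd).symm⟩)
        apply fan_adj_succ
        show ((p.1 : Fin (n+1)) : ℕ) + 1 = ((i : Fin (n+1)) : ℕ)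
        rw [val_cast_le hg.2.1, val_cast_le (by omega : i ≤ n)]
        exact h2
      · have hieq : i = n + 1 := by omega
        subst hieq
        rw [cast_np1]
        exact strong_adj_hub0 (iot_ne_00 (hsub hp))

end WithHk
end FanProof

noncomputable section FanProof2
open Finset Classical

variable {n : ℕ} {f : Fin (n+1) × Fin (n+1) → Fin 4} {k : ℕ}

section WithHk2
variable
  (Hk : ∀ S : Finset (Fin (n+1) × Fin (n+1)), IsMonochromatic f S →
    ((SPG n).induce (S : Set (Fin (n+1) × Fin (n+1)))).Connected → S.card ≤ k)

include Hk

/-- columns whose dominator is coloured `c0` -/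
lemma Jc_bound :
    ((Finset.Icc 1 n).filter (fun j => cDom n f j = c0c n f)).card ≤ k := by
  set J := (Finset.Icc 1 n).filter (fun j => cDom n f j = c0c n f) with hJ
  have hinj : Set.InjOn (fun j : ℕ => ((0 : Fin (n+1)), (j : Fin (n+1)))) J := by
    intro a ha b hb h
    have ha' := Finset.mem_Icc.mp (Finset.mem_filter.mp ha).1
    have hb' := Finset.mem_Icc.mp (Finset.mem_filter.mp hb).1
    have := congrArg (fun x => (x.2 : ℕ)) h
    simpa [val_cast_le ha'.2, val_cast_le hb'.2] using this
  rw [← Finset.card_image_of_injOn hinj]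
  apply star_bound Hk (0, 0)
  · intro u hu
    obtain ⟨j, hj, rfl⟩ := Finset.mem_image.mp hu
    exact (Finset.mem_filter.mp hj).2
  · intro u hu hne
    obtain ⟨j, hj, rfl⟩ := Finset.mem_image.mp hu
    exact strong_adj_hub0 hne

lemma Ir_bound :
    ((Finset.Icc 1 n).filter (fun i => rDom n f i = c0c n f)).card ≤ k := by
  set I := (Finset.Icc 1 n).filter (fun i => rDom n f i = c0c n f) with hI
  have hinj : Set.InjOn (fun i : ℕ => ((i : Fin (n+1)), (0 : Fin (n+1)))) I := by
    intro a ha b hb h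
    have ha' := Finset.mem_Icc.mp (Finset.mem_filter.mp ha).1
    have hb' := Finset.mem_Icc.mp (Finset.mem_filter.mp hb).1
    have := congrArg (fun x => (x.1 : ℕ)) h
    simpa [val_cast_le ha'.2, val_cast_le hb'.2] using this
  rw [← Finset.card_image_of_injOn hinj]
  apply star_bound Hk (0, 0)
  · intro u hu
    obtain ⟨i, hi, rfl⟩ := Finset.mem_image.mp hu
    exact (Finset.mem_filter.mp hi).2
  · intro u hu hne
    obtain ⟨i, hi, rfl⟩ := Finset.mem_image.mp hu
    exact strong_adj_hub0 hne

/-- if some row dominator and some column dominator share a non-`c0` colour `x`,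
then there are at most `k` rows and at most `k` columns of colour `x`. -/
lemma cross_bound (x : Fin 4)
    (hrow : ∃ i ∈ Finset.Icc 1 n, rDom n f i = x)
    (hcol : ∃ j ∈ Finset.Icc 1 n, cDom n f j = x) :
    ((Finset.Icc 1 n).filter (fun i => rDom n f i = x)).card ≤ k ∧
    ((Finset.Icc 1 n).filter (fun j => cDom n f j = x)).card ≤ k := by
  obtain ⟨i0, hi0, hi0x⟩ := hrow
  obtain ⟨j0, hj0, hj0x⟩ := hcol
  rw [Finset.mem_Icc] at hi0 hj0
  set R := (Finset.Icc 1 n).filter (fun i => rDom n f i = x) with hR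
  set C := (Finset.Icc 1 n).filter (fun j => cDom n f j = x) with hC
  set D : Finset (Fin (n+1) × Fin (n+1)) :=
    (R.image (fun i : ℕ => ((i : Fin (n+1)), (0 : Fin (n+1))))) ∪
    (C.image (fun j : ℕ => ((0 : Fin (n+1)), (j : Fin (n+1))))) with hD
  have hv0 : (((i0 : Fin (n+1)), (0 : Fin (n+1)))) ∈ D := by
    apply Finset.mem_union_left
    exact Finset.mem_image_of_mem _ (Finset.mem_filter.mpr ⟨Finset.mem_Icc.mpr hi0, hi0x⟩)
  have hadjRC : ∀ i j : ℕ, 1 ≤ i → i ≤ n → 1 ≤ j → j ≤ n →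
      (SPG n).Adj ((i : Fin (n+1)), (0 : Fin (n+1))) ((0 : Fin (n+1)), (j : Fin (n+1))) := by
    intro i j h1 h2 h3 h4
    exact Or.inr (Or.inr ⟨(fan_adj_zero (cast_ne_zero' h1 h2)).symm,
      fan_adj_zero (cast_ne_zero' h3 h4)⟩)
  have hDk : D.card ≤ k := by
    apply twohub_bound Hk ((i0 : Fin (n+1)), (0 : Fin (n+1)))
      ((0 : Fin (n+1)), (j0 : Fin (n+1)))
      (hadjRC i0 j0 hi0.1 hi0.2 hj0.1 hj0.2) D
    · intro u hu
      have hv0' : f (((i0 : Fin (n+1)), (0 : Fin (n+1)))) = x := hi0x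
      rcases Finset.mem_union.mp hu with h | h
      · obtain ⟨i, hi, rfl⟩ := Finset.mem_image.mp h
        rw [hv0']
        exact (Finset.mem_filter.mp hi).2
      · obtain ⟨j, hj, rfl⟩ := Finset.mem_image.mp h
        rw [hv0']
        exact (Finset.mem_filter.mp hj).2
    · exact hj0x.trans hi0x.symm
    · intro u hu
      rcases Finset.mem_union.mp hu with h | h
      · obtain ⟨i, hi, rfl⟩ := Finset.mem_image.mp h
        have hi' := Finset.mem_Icc.mp (Finset.mem_filter.mp hi).1
        exact Or.inr (Or.inr (Or.inr (hadjRC i j0 hi'.1 hi'.2 hj0.1 hj0.2)))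
      · obtain ⟨j, hj, rfl⟩ := Finset.mem_image.mp h
        have hj' := Finset.mem_Icc.mp (Finset.mem_filter.mp hj).1
        exact Or.inr (Or.inr (Or.inl ((hadjRC i0 j hi0.1 hi0.2 hj'.1 hj'.2).symm)))
  constructor
  · have hinj : Set.InjOn (fun i : ℕ => ((i : Fin (n+1)), (0 : Fin (n+1)))) R := by
      intro a ha b hb h
      have ha' := Finset.mem_Icc.mp (Finset.mem_filter.mp ha).1
      have hb' := Finset.mem_Icc.mp (Finset.mem_filter.mp hb).1
      have := congrArg (fun x => (x.1 : ℕ)) h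
      simpa [val_cast_le ha'.2, val_cast_le hb'.2] using this
    calc R.card = (R.image _).card := (Finset.card_image_of_injOn hinj).symm
    _ ≤ D.card := Finset.card_le_card (Finset.subset_union_left)
    _ ≤ k := hDk
  · have hinj : Set.InjOn (fun j : ℕ => ((0 : Fin (n+1)), (j : Fin (n+1)))) C := by
      intro a ha b hb h
      have ha' := Finset.mem_Icc.mp (Finset.mem_filter.mp ha).1
      have hb' := Finset.mem_Icc.mp (Finset.mem_filter.mp hb).1
      have := congrArg (fun x => (x.2 : ℕ)) h
      simpa [val_cast_le ha'.2, val_cast_le hb'.2] using this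
    calc C.card = (C.image _).card := (Finset.card_image_of_injOn hinj).symm
    _ ≤ D.card := Finset.card_le_card (Finset.subset_union_right)
    _ ≤ k := hDk

end WithHk2
end FanProof2

noncomputable section FanProof3
open Finset Classical

variable {n : ℕ} {f : Fin (n+1) × Fin (n+1) → Fin 4} {k : ℕ}

section WithHk3
variable
  (Hk : ∀ S : Finset (Fin (n+1) × Fin (n+1)), IsMonochromatic f S →
    ((SPG n).induce (S : Set (Fin (n+1) × Fin (n+1)))).Connected → S.card ≤ k)

include Hk

omit Hk in
lemma sub_prod_card {A : Finset (ℕ × ℕ)} {B C : Finset ℕ}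
    (h : ∀ p ∈ A, p.1 ∈ B ∧ p.2 ∈ C) : A.card ≤ B.card * C.card := by
  have hsub : A ⊆ B ×ˢ C := by
    intro p hp
    rw [Finset.mem_product]
    exact h p hp
  calc A.card ≤ (B ×ˢ C).card := Finset.card_le_card hsub
  _ = B.card * C.card := Finset.card_product _ _

lemma hC1_bound :
    ((gridP n).filter (fun p => cDom n f (p.2+1) = c0c n f)).card ≤ n * (k+1) := by
  classical
  set Bc := (Finset.Icc 1 n).filter (fun j => cDom n f (j+1) = c0c n f) with hBcdef
  have hBc : Bc.card ≤ k + 1 := by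
    have hsub : Bc ⊆ (((Finset.Icc 1 n).filter (fun j => cDom n f j = c0c n f)).image
        (fun j => j - 1)) ∪ {n} := by
      intro j hj
      rw [hBcdef, Finset.mem_filter, Finset.mem_Icc] at hj
      by_cases hjn : j = n
      · exact Finset.mem_union_right _ (Finset.mem_singleton.mpr hjn)
      · apply Finset.mem_union_left
        apply Finset.mem_image.mpr
        exact ⟨j + 1, Finset.mem_filter.mpr ⟨Finset.mem_Icc.mpr (by omega), hj.2⟩, by omega⟩
    calc Bc.card ≤ _ := Finset.card_le_card hsub
    _ ≤ _ + ({n} : Finset ℕ).card := Finset.card_union_le _ _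
    _ ≤ k + 1 := by
      have h1 := Finset.card_image_le (s := (Finset.Icc 1 n).filter
        (fun j => cDom n f j = c0c n f)) (f := fun j => j - 1)
      have h2 := Jc_bound Hk
      simp only [Finset.card_singleton]
      omega
  have h := sub_prod_card (A := (gridP n).filter (fun p => cDom n f (p.2+1) = c0c n f))
      (B := Finset.Icc 1 n) (C := Bc) ?_
  · calc _ ≤ (Finset.Icc 1 n).card * Bc.card := h
    _ ≤ n * (k+1) := by
      rw [Nat.card_Icc]
      exact Nat.mul_le_mul (by omega) hBc
  · intro p hp
    rw [Finset.mem_filter] at hp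
    have hg := mem_gridP.mp hp.1
    exact ⟨Finset.mem_Icc.mpr ⟨hg.1, hg.2.1⟩,
      Finset.mem_filter.mpr ⟨Finset.mem_Icc.mpr ⟨hg.2.2.1, hg.2.2.2⟩, hp.2⟩⟩

lemma hC2_bound :
    ((gridP n).filter (fun p => rDom n f p.1 = c0c n f)).card ≤ n * k := by
  classical
  have h := sub_prod_card (A := (gridP n).filter (fun p => rDom n f p.1 = c0c n f))
      (B := (Finset.Icc 1 n).filter (fun i => rDom n f i = c0c n f))
      (C := Finset.Icc 1 n) ?_
  · calc _ ≤ _ := h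
    _ ≤ k * n := by
      rw [Nat.card_Icc]
      exact Nat.mul_le_mul (Ir_bound Hk) (by omega)
    _ = n * k := Nat.mul_comm _ _
  · intro p hp
    rw [Finset.mem_filter] at hp
    have hg := mem_gridP.mp hp.1
    exact ⟨Finset.mem_filter.mpr ⟨Finset.mem_Icc.mpr ⟨hg.1, hg.2.1⟩, hp.2⟩,
      Finset.mem_Icc.mpr ⟨hg.2.2.1, hg.2.2.2⟩⟩

lemma hC2'_bound :
    ((gridP n).filter (fun p => cDom n f p.2 = c0c n f)).card ≤ n * k := by
  classical
  have h := sub_prod_card (A := (gridP n).filter (fun p => cDom n f p.2 = c0c n f))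
      (B := Finset.Icc 1 n)
      (C := (Finset.Icc 1 n).filter (fun j => cDom n f j = c0c n f)) ?_
  · calc _ ≤ _ := h
    _ ≤ n * k := by
      rw [Nat.card_Icc]
      exact Nat.mul_le_mul (by omega) (Jc_bound Hk)
  · intro p hp
    rw [Finset.mem_filter] at hp
    have hg := mem_gridP.mp hp.1
    exact ⟨Finset.mem_Icc.mpr ⟨hg.1, hg.2.1⟩,
      Finset.mem_filter.mpr ⟨Finset.mem_Icc.mpr ⟨hg.2.2.1, hg.2.2.2⟩, hp.2⟩⟩

lemma hC3_bound :
    ((gridP n).filter (fun p => rDom n f (p.1+1) = c0c n f)).card ≤ n * (k+1) := by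
  classical
  set Br := (Finset.Icc 1 n).filter (fun i => rDom n f (i+1) = c0c n f) with hBrdef
  have hBr : Br.card ≤ k + 1 := by
    have hsub : Br ⊆ (((Finset.Icc 1 n).filter (fun i => rDom n f i = c0c n f)).image
        (fun i => i - 1)) ∪ {n} := by
      intro i hi
      rw [hBrdef, Finset.mem_filter, Finset.mem_Icc] at hi
      by_cases hin : i = n
      · exact Finset.mem_union_right _ (Finset.mem_singleton.mpr hin)
      · apply Finset.mem_union_left
        apply Finset.mem_image.mpr
        exact ⟨i + 1, Finset.mem_filter.mpr ⟨Finset.mem_Icc.mpr (by omega), hi.2⟩, by omega⟩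
    calc Br.card ≤ _ := Finset.card_le_card hsub
    _ ≤ _ + ({n} : Finset ℕ).card := Finset.card_union_le _ _
    _ ≤ k + 1 := by
      have h1 := Finset.card_image_le (s := (Finset.Icc 1 n).filter
        (fun i => rDom n f i = c0c n f)) (f := fun i => i - 1)
      have h2 := Ir_bound Hk
      simp only [Finset.card_singleton]
      omega
  have h := sub_prod_card (A := (gridP n).filter (fun p => rDom n f (p.1+1) = c0c n f))
      (B := Br) (C := Finset.Icc 1 n) ?_
  · calc _ ≤ Br.card * (Finset.Icc 1 n).card := h
    _ ≤ (k+1) * n := by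
      rw [Nat.card_Icc]
      exact Nat.mul_le_mul hBr (by omega)
    _ = n * (k+1) := Nat.mul_comm _ _
  · intro p hp
    rw [Finset.mem_filter] at hp
    have hg := mem_gridP.mp hp.1
    exact ⟨Finset.mem_filter.mpr ⟨Finset.mem_Icc.mpr ⟨hg.1, hg.2.1⟩, hp.2⟩,
      Finset.mem_Icc.mpr ⟨hg.2.2.1, hg.2.2.2⟩⟩

end WithHk3
end FanProof3

noncomputable section FanProof4
open Finset Classical

variable {n : ℕ} {f : Fin (n+1) × Fin (n+1) → Fin 4} {k : ℕ}

section WithHk4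
variable
  (Hk : ∀ S : Finset (Fin (n+1) × Fin (n+1)), IsMonochromatic f S →
    ((SPG n).induce (S : Set (Fin (n+1) × Fin (n+1)))).Connected → S.card ≤ k)

include Hk

lemma hC4_bound :
    ((gridP n).filter (fun p => cDom n f (p.2+1) = rDom n f p.1 ∧
      cDom n f (p.2+1) ≠ c0c n f)).card ≤ 4 * (k * k) := by
  classical
  set term : Fin 4 → Finset (ℕ × ℕ) := fun x =>
    if x ≠ c0c n f ∧ (∃ i ∈ Finset.Icc 1 n, rDom n f i = x) ∧
        (∃ j ∈ Finset.Icc 1 n, cDom n f j = x) then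
      ((Finset.Icc 1 n).filter (fun i => rDom n f i = x)) ×ˢ
      (((Finset.Icc 1 n).filter (fun j => cDom n f j = x)).image (fun j => j - 1))
    else ∅ with hterm
  have hsub : ((gridP n).filter (fun p => cDom n f (p.2+1) = rDom n f p.1 ∧
      cDom n f (p.2+1) ≠ c0c n f)) ⊆ Finset.univ.biUnion term := by
    intro p hp
    rw [Finset.mem_filter] at hp
    obtain ⟨hpg, hx1, hxne⟩ := hp
    have hg := mem_gridP.mp hpg
    have hle : p.2 + 1 ≤ n := by
      rcases Nat.lt_or_ge (p.2 + 1) (n + 1) with h | h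
      · omega
      · exfalso
        have : p.2 + 1 = n + 1 := by omega
        rw [this, cDom_np1] at hxne
        exact hxne rfl
    apply Finset.mem_biUnion.mpr
    refine ⟨cDom n f (p.2+1), Finset.mem_univ _, ?_⟩
    rw [hterm]
    simp only
    rw [if_pos ⟨hxne, ⟨p.1, Finset.mem_Icc.mpr ⟨hg.1, hg.2.1⟩, hx1.symm⟩,
      ⟨p.2 + 1, Finset.mem_Icc.mpr ⟨by omega, hle⟩, rfl⟩⟩]
    rw [Finset.mem_product]
    constructor
    · exact Finset.mem_filter.mpr ⟨Finset.mem_Icc.mpr ⟨hg.1, hg.2.1⟩, hx1.symm⟩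
    · exact Finset.mem_image.mpr ⟨p.2 + 1,
        Finset.mem_filter.mpr ⟨Finset.mem_Icc.mpr ⟨by omega, hle⟩, rfl⟩, by omega⟩
  calc _ ≤ (Finset.univ.biUnion term).card := Finset.card_le_card hsub
  _ ≤ ∑ x : Fin 4, (term x).card := Finset.card_biUnion_le
  _ ≤ ∑ _x : Fin 4, k * k := by
    apply Finset.sum_le_sum
    intro x _
    rw [hterm]
    simp only
    split_ifs with hcond
    · obtain ⟨hne, hrow, hcol⟩ := hcond
      have hc := cross_bound Hk x hrow hcol
      rw [Finset.card_product]
      exact Nat.mul_le_mul hc.1 (le_trans Finset.card_image_le hc.2)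
    · simp
  _ = 4 * (k * k) := by
    rw [Finset.sum_const, Finset.card_univ, Fintype.card_fin]
    simp [Nat.smul_one_eq_cast]

lemma hC4'_bound :
    ((gridP n).filter (fun p => cDom n f (p.2+1) = rDom n f (p.1+1) ∧
      cDom n f (p.2+1) ≠ c0c n f)).card ≤ 4 * (k * k) := by
  classical
  set term : Fin 4 → Finset (ℕ × ℕ) := fun x =>
    if x ≠ c0c n f ∧ (∃ i ∈ Finset.Icc 1 n, rDom n f i = x) ∧
        (∃ j ∈ Finset.Icc 1 n, cDom n f j = x) then
      (((Finset.Icc 1 n).filter (fun i => rDom n f i = x)).image (fun i => i - 1)) ×ˢ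
      (((Finset.Icc 1 n).filter (fun j => cDom n f j = x)).image (fun j => j - 1))
    else ∅ with hterm
  have hsub : ((gridP n).filter (fun p => cDom n f (p.2+1) = rDom n f (p.1+1) ∧
      cDom n f (p.2+1) ≠ c0c n f)) ⊆ Finset.univ.biUnion term := by
    intro p hp
    rw [Finset.mem_filter] at hp
    obtain ⟨hpg, hx1, hxne⟩ := hp
    have hg := mem_gridP.mp hpg
    have hle : p.2 + 1 ≤ n := by
      rcases Nat.lt_or_ge (p.2 + 1) (n + 1) with h | h
      · omega
      · exfalso
        have : p.2 + 1 = n + 1 := by omega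
        rw [this, cDom_np1] at hxne
        exact hxne rfl
    have hle' : p.1 + 1 ≤ n := by
      rcases Nat.lt_or_ge (p.1 + 1) (n + 1) with h | h
      · omega
      · exfalso
        have h2 : p.1 + 1 = n + 1 := by omega
        rw [h2, rDom_np1] at hx1
        exact hxne hx1
    apply Finset.mem_biUnion.mpr
    refine ⟨cDom n f (p.2+1), Finset.mem_univ _, ?_⟩
    rw [hterm]
    simp only
    rw [if_pos ⟨hxne, ⟨p.1 + 1, Finset.mem_Icc.mpr ⟨by omega, hle'⟩, hx1.symm⟩,
      ⟨p.2 + 1, Finset.mem_Icc.mpr ⟨by omega, hle⟩, rfl⟩⟩]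
    rw [Finset.mem_product]
    constructor
    · exact Finset.mem_image.mpr ⟨p.1 + 1,
        Finset.mem_filter.mpr ⟨Finset.mem_Icc.mpr ⟨by omega, hle'⟩, hx1.symm⟩, by omega⟩
    · exact Finset.mem_image.mpr ⟨p.2 + 1,
        Finset.mem_filter.mpr ⟨Finset.mem_Icc.mpr ⟨by omega, hle⟩, rfl⟩, by omega⟩
  calc _ ≤ (Finset.univ.biUnion term).card := Finset.card_le_card hsub
  _ ≤ ∑ x : Fin 4, (term x).card := Finset.card_biUnion_le
  _ ≤ ∑ _x : Fin 4, k * k := by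
    apply Finset.sum_le_sum
    intro x _
    rw [hterm]
    simp only
    split_ifs with hcond
    · obtain ⟨hne, hrow, hcol⟩ := hcond
      have hc := cross_bound Hk x hrow hcol
      rw [Finset.card_product]
      exact Nat.mul_le_mul (le_trans Finset.card_image_le hc.1)
        (le_trans Finset.card_image_le hc.2)
    · simp
  _ = 4 * (k * k) := by
    rw [Finset.sum_const, Finset.card_univ, Fintype.card_fin]
    simp [Nat.smul_one_eq_cast]

end WithHk4
end FanProof4

noncomputable section FanProof5
open Finset Classical

variable {n : ℕ} {f : Fin (n+1) × Fin (n+1) → Fin 4} {k : ℕ}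

section WithHk5
variable
  (Hk : ∀ S : Finset (Fin (n+1) × Fin (n+1)), IsMonochromatic f S →
    ((SPG n).induce (S : Set (Fin (n+1) × Fin (n+1)))).Connected → S.card ≤ k)

include Hk

lemma hA1_bound : ((gridP n).filter (fun p => Fc n f p = c0c n f)).card ≤ k := by
  apply c0_bound Hk _ (Finset.filter_subset _ _)
  intro p hp
  exact (Finset.mem_filter.mp hp).2

lemma hA2_bound : ((gridP n).filter (fun p => Fc n f p = cDom n f p.2)).card ≤ n * k := by
  classical
  have hsub : ((gridP n).filter (fun p => Fc n f p = cDom n f p.2)) ⊆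
      (Finset.Icc 1 n).biUnion (fun j => (gridP n).filter
        (fun p => p.2 = j ∧ Fc n f p = cDom n f j)) := by
    intro p hp
    rw [Finset.mem_filter] at hp
    have hg := mem_gridP.mp hp.1
    exact Finset.mem_biUnion.mpr ⟨p.2, Finset.mem_Icc.mpr ⟨hg.2.2.1, hg.2.2.2⟩,
      Finset.mem_filter.mpr ⟨hp.1, rfl, hp.2⟩⟩
  calc _ ≤ _ := Finset.card_le_card hsub
  _ ≤ ∑ j ∈ Finset.Icc 1 n, ((gridP n).filter
      (fun p => p.2 = j ∧ Fc n f p = cDom n f j)).card := Finset.card_biUnion_le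
  _ ≤ ∑ _j ∈ Finset.Icc 1 n, k := by
    apply Finset.sum_le_sum
    intro j hj
    have hj' := Finset.mem_Icc.mp hj
    apply col_bound Hk j (by omega) _ (Finset.filter_subset _ _)
    intro p hp
    rw [Finset.mem_filter] at hp
    exact ⟨hp.2.2, Or.inl hp.2.1⟩
  _ ≤ n * k := by
    rw [Finset.sum_const, Nat.card_Icc, smul_eq_mul]
    exact Nat.mul_le_mul_right k (by omega)

lemma hA3_bound : ((gridP n).filter (fun p => Fc n f p = cDom n f (p.2+1))).card ≤ n * k := by
  classical
  have hsub : ((gridP n).filter (fun p => Fc n f p = cDom n f (p.2+1))) ⊆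
      (Finset.Icc 2 (n+1)).biUnion (fun j => (gridP n).filter
        (fun p => p.2 + 1 = j ∧ Fc n f p = cDom n f j)) := by
    intro p hp
    rw [Finset.mem_filter] at hp
    have hg := mem_gridP.mp hp.1
    exact Finset.mem_biUnion.mpr ⟨p.2 + 1, Finset.mem_Icc.mpr ⟨by omega, by omega⟩,
      Finset.mem_filter.mpr ⟨hp.1, rfl, hp.2⟩⟩
  calc _ ≤ _ := Finset.card_le_card hsub
  _ ≤ ∑ j ∈ Finset.Icc 2 (n+1), ((gridP n).filter
      (fun p => p.2 + 1 = j ∧ Fc n f p = cDom n f j)).card := Finset.card_biUnion_le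
  _ ≤ ∑ _j ∈ Finset.Icc 2 (n+1), k := by
    apply Finset.sum_le_sum
    intro j hj
    have hj' := Finset.mem_Icc.mp hj
    apply col_bound Hk j (by omega) _ (Finset.filter_subset _ _)
    intro p hp
    rw [Finset.mem_filter] at hp
    exact ⟨hp.2.2, Or.inr hp.2.1⟩
  _ ≤ n * k := by
    rw [Finset.sum_const, Nat.card_Icc, smul_eq_mul]
    exact Nat.mul_le_mul_right k (by omega)

lemma hA4_bound : ((gridP n).filter (fun p => Fc n f p = rDom n f p.1)).card ≤ n * k := by
  classical
  have hsub : ((gridP n).filter (fun p => Fc n f p = rDom n f p.1)) ⊆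
      (Finset.Icc 1 n).biUnion (fun i => (gridP n).filter
        (fun p => p.1 = i ∧ Fc n f p = rDom n f i)) := by
    intro p hp
    rw [Finset.mem_filter] at hp
    have hg := mem_gridP.mp hp.1
    exact Finset.mem_biUnion.mpr ⟨p.1, Finset.mem_Icc.mpr ⟨hg.1, hg.2.1⟩,
      Finset.mem_filter.mpr ⟨hp.1, rfl, hp.2⟩⟩
  calc _ ≤ _ := Finset.card_le_card hsub
  _ ≤ ∑ i ∈ Finset.Icc 1 n, ((gridP n).filter
      (fun p => p.1 = i ∧ Fc n f p = rDom n f i)).card := Finset.card_biUnion_le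
  _ ≤ ∑ _i ∈ Finset.Icc 1 n, k := by
    apply Finset.sum_le_sum
    intro i hi
    have hi' := Finset.mem_Icc.mp hi
    apply row_bound Hk i (by omega) _ (Finset.filter_subset _ _)
    intro p hp
    rw [Finset.mem_filter] at hp
    exact ⟨hp.2.2, Or.inl hp.2.1⟩
  _ ≤ n * k := by
    rw [Finset.sum_const, Nat.card_Icc, smul_eq_mul]
    exact Nat.mul_le_mul_right k (by omega)

lemma hA5_bound : ((gridP n).filter (fun p => Fc n f p = rDom n f (p.1+1))).card ≤ n * k := by
  classical
  have hsub : ((gridP n).filter (fun p => Fc n f p = rDom n f (p.1+1))) ⊆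
      (Finset.Icc 2 (n+1)).biUnion (fun i => (gridP n).filter
        (fun p => p.1 + 1 = i ∧ Fc n f p = rDom n f i)) := by
    intro p hp
    rw [Finset.mem_filter] at hp
    have hg := mem_gridP.mp hp.1
    exact Finset.mem_biUnion.mpr ⟨p.1 + 1, Finset.mem_Icc.mpr ⟨by omega, by omega⟩,
      Finset.mem_filter.mpr ⟨hp.1, rfl, hp.2⟩⟩
  calc _ ≤ _ := Finset.card_le_card hsub
  _ ≤ ∑ i ∈ Finset.Icc 2 (n+1), ((gridP n).filter
      (fun p => p.1 + 1 = i ∧ Fc n f p = rDom n f i)).card := Finset.card_biUnion_le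
  _ ≤ ∑ _i ∈ Finset.Icc 2 (n+1), k := by
    apply Finset.sum_le_sum
    intro i hi
    have hi' := Finset.mem_Icc.mp hi
    apply row_bound Hk i (by omega) _ (Finset.filter_subset _ _)
    intro p hp
    rw [Finset.mem_filter] at hp
    exact ⟨hp.2.2, Or.inr hp.2.1⟩
  _ ≤ n * k := by
    rw [Finset.sum_const, Nat.card_Icc, smul_eq_mul]
    exact Nat.mul_le_mul_right k (by omega)

omit Hk in
lemma hA6_bound : ((gridP n).filter (fun p => p.1 = n)).card ≤ n := by
  classical
  have h := sub_prod_card (A := (gridP n).filter (fun p => p.1 = n))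
      (B := ({n} : Finset ℕ)) (C := Finset.Icc 1 n) ?_
  · calc _ ≤ _ := h
    _ ≤ n := by rw [Finset.card_singleton, Nat.card_Icc]; omega
  · intro p hp
    rw [Finset.mem_filter] at hp
    have hg := mem_gridP.mp hp.1
    exact ⟨Finset.mem_singleton.mpr hp.2, Finset.mem_Icc.mpr ⟨hg.2.2.1, hg.2.2.2⟩⟩

omit Hk in
lemma hA7_bound : ((gridP n).filter (fun p => p.2 = n)).card ≤ n := by
  classical
  have h := sub_prod_card (A := (gridP n).filter (fun p => p.2 = n))
      (B := Finset.Icc 1 n) (C := ({n} : Finset ℕ)) ?_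
  · calc _ ≤ _ := h
    _ ≤ n := by rw [Finset.card_singleton, Nat.card_Icc]; omega
  · intro p hp
    rw [Finset.mem_filter] at hp
    have hg := mem_gridP.mp hp.1
    exact ⟨Finset.mem_Icc.mpr ⟨hg.1, hg.2.1⟩, Finset.mem_singleton.mpr hp.2⟩

lemma hA8_bound : ((gridP n).filter (fun p => Bad1 n f p)).card ≤
    n * (k+1) + n * k + n * (k+1) + 4 * (k * k) := by
  classical
  have hsub : ((gridP n).filter (fun p => Bad1 n f p)) ⊆
      ((gridP n).filter (fun p => cDom n f (p.2+1) = c0c n f)) ∪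
      ((gridP n).filter (fun p => rDom n f p.1 = c0c n f)) ∪
      ((gridP n).filter (fun p => rDom n f (p.1+1) = c0c n f)) ∪
      ((gridP n).filter (fun p => cDom n f (p.2+1) = rDom n f p.1 ∧
        cDom n f (p.2+1) ≠ c0c n f)) := by
    intro p hp
    rw [Finset.mem_filter] at hp
    obtain ⟨hpg, hbad⟩ := hp
    rcases fin4_two _ _ _ _ hbad with h | h | h | ⟨h1, h2, h3⟩
    · exact Finset.mem_union_left _ (Finset.mem_union_left _ (Finset.mem_union_left _
        (Finset.mem_filter.mpr ⟨hpg, h⟩)))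
    · exact Finset.mem_union_left _ (Finset.mem_union_left _ (Finset.mem_union_right _
        (Finset.mem_filter.mpr ⟨hpg, h⟩)))
    · exact Finset.mem_union_left _ (Finset.mem_union_right _
        (Finset.mem_filter.mpr ⟨hpg, h⟩))
    · exact Finset.mem_union_right _ (Finset.mem_filter.mpr ⟨hpg, h1, h3⟩)
  calc _ ≤ _ := Finset.card_le_card hsub
  _ ≤ _ := Finset.card_union_le _ _
  _ ≤ _ + _ := Nat.add_le_add_right (Finset.card_union_le _ _) _
  _ ≤ (_ + _) + _ + _ := Nat.add_le_add_right (Nat.add_le_add_right (Finset.card_union_le _ _) _) _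
  _ ≤ n * (k+1) + n * k + n * (k+1) + 4 * (k * k) := by
    have h1 := hC1_bound Hk
    have h2 := hC2_bound Hk
    have h3 := hC3_bound Hk
    have h4 := hC4_bound Hk
    omega

lemma hA9_bound : ((gridP n).filter (fun p => Bad2 n f p)).card ≤
    n * k + n * (k+1) + n * (k+1) + 4 * (k * k) := by
  classical
  have hsub : ((gridP n).filter (fun p => Bad2 n f p)) ⊆
      ((gridP n).filter (fun p => cDom n f p.2 = c0c n f)) ∪
      ((gridP n).filter (fun p => cDom n f (p.2+1) = c0c n f)) ∪
      ((gridP n).filter (fun p => rDom n f (p.1+1) = c0c n f)) ∪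
      ((gridP n).filter (fun p => cDom n f (p.2+1) = rDom n f (p.1+1) ∧
        cDom n f (p.2+1) ≠ c0c n f)) := by
    intro p hp
    rw [Finset.mem_filter] at hp
    obtain ⟨hpg, hbad⟩ := hp
    rcases fin4_two _ _ _ _ hbad with h | h | h | ⟨h1, h2, h3⟩
    · exact Finset.mem_union_left _ (Finset.mem_union_left _ (Finset.mem_union_left _
        (Finset.mem_filter.mpr ⟨hpg, h⟩)))
    · exact Finset.mem_union_left _ (Finset.mem_union_left _ (Finset.mem_union_right _
        (Finset.mem_filter.mpr ⟨hpg, h⟩)))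
    · exact Finset.mem_union_left _ (Finset.mem_union_right _
        (Finset.mem_filter.mpr ⟨hpg, h⟩))
    · refine Finset.mem_union_right _ (Finset.mem_filter.mpr ⟨hpg, h2, ?_⟩)
      rw [← h1]
      exact h3
  calc _ ≤ _ := Finset.card_le_card hsub
  _ ≤ _ := Finset.card_union_le _ _
  _ ≤ _ + _ := Nat.add_le_add_right (Finset.card_union_le _ _) _
  _ ≤ (_ + _) + _ + _ := Nat.add_le_add_right (Nat.add_le_add_right (Finset.card_union_le _ _) _) _
  _ ≤ n * k + n * (k+1) + n * (k+1) + 4 * (k * k) := by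
    have h1 := hC2'_bound Hk
    have h2 := hC1_bound Hk
    have h3 := hC3_bound Hk
    have h4 := hC4'_bound Hk
    omega

lemma Sb_card_le (hn : 1 ≤ n) (hk : 1 ≤ k) (hkn : k ≤ n) :
    (Sb n f).card ≤ 25 * (n * k) := by
  classical
  have hsub : Sb n f ⊆
      ((gridP n).filter (fun p => Fc n f p = c0c n f)) ∪
      ((gridP n).filter (fun p => Fc n f p = cDom n f p.2)) ∪
      ((gridP n).filter (fun p => Fc n f p = cDom n f (p.2+1))) ∪
      ((gridP n).filter (fun p => Fc n f p = rDom n f p.1)) ∪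
      ((gridP n).filter (fun p => Fc n f p = rDom n f (p.1+1))) ∪
      ((gridP n).filter (fun p => p.1 = n)) ∪
      ((gridP n).filter (fun p => p.2 = n)) ∪
      ((gridP n).filter (fun p => Bad1 n f p)) ∪
      ((gridP n).filter (fun p => Bad2 n f p)) := by
    intro p hp
    rw [Sb, Finset.mem_filter] at hp
    obtain ⟨hpg, hins⟩ := hp
    simp only [Finset.mem_union, Finset.mem_filter]
    rcases hins with h | h | h | h | h | h | h | h | h
    · tauto
    · tauto
    · tauto
    · tauto
    · tauto
    · tauto
    · tauto
    · tauto
    · tauto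
  have hcard : (Sb n f).card ≤
      ((gridP n).filter (fun p => Fc n f p = c0c n f)).card +
      ((gridP n).filter (fun p => Fc n f p = cDom n f p.2)).card +
      ((gridP n).filter (fun p => Fc n f p = cDom n f (p.2+1))).card +
      ((gridP n).filter (fun p => Fc n f p = rDom n f p.1)).card +
      ((gridP n).filter (fun p => Fc n f p = rDom n f (p.1+1))).card +
      ((gridP n).filter (fun p => p.1 = n)).card +
      ((gridP n).filter (fun p => p.2 = n)).card +
      ((gridP n).filter (fun p => Bad1 n f p)).card +
      ((gridP n).filter (fun p => Bad2 n f p)).card := by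
    refine le_trans (Finset.card_le_card hsub) ?_
    refine le_trans (Finset.card_union_le _ _) ?_
    refine Nat.add_le_add_right ?_ _
    refine le_trans (Finset.card_union_le _ _) ?_
    refine Nat.add_le_add_right ?_ _
    refine le_trans (Finset.card_union_le _ _) ?_
    refine Nat.add_le_add_right ?_ _
    refine le_trans (Finset.card_union_le _ _) ?_
    refine Nat.add_le_add_right ?_ _
    refine le_trans (Finset.card_union_le _ _) ?_
    refine Nat.add_le_add_right ?_ _
    refine le_trans (Finset.card_union_le _ _) ?_
    refine Nat.add_le_add_right ?_ _
    refine le_trans (Finset.card_union_le _ _) ?_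
    refine Nat.add_le_add_right ?_ _
    exact Finset.card_union_le _ _
  have b1 := hA1_bound Hk
  have b2 := hA2_bound Hk
  have b3 := hA3_bound Hk
  have b4 := hA4_bound Hk
  have b5 := hA5_bound Hk
  have b6 := hA6_bound (n := n)
  have b7 := hA7_bound (n := n)
  have b8 := hA8_bound Hk
  have b9 := hA9_bound Hk
  have e1 : k ≤ n * k := Nat.le_mul_of_pos_left k hn
  have e2 : n ≤ n * k := Nat.le_mul_of_pos_right n hk
  have e3 : k * k ≤ n * k := Nat.mul_le_mul_right k hkn
  have expand : n * (k + 1) = n * k + n := by ring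
  omega

end WithHk5
end FanProof5

noncomputable section FanProof6
open Finset Classical

variable {n : ℕ} {f : Fin (n+1) × Fin (n+1) → Fin 4} {k : ℕ}

lemma Tg_subset_gridP : Tg n f ⊆ gridP n := Finset.filter_subset _ _

lemma Tg_props {p : ℕ × ℕ} (hp : p ∈ Tg n f) :
    p ∈ gridP n ∧ Fc n f p ≠ c0c n f ∧ Fc n f p ≠ cDom n f p.2 ∧
    Fc n f p ≠ cDom n f (p.2+1) ∧ Fc n f p ≠ rDom n f p.1 ∧
    Fc n f p ≠ rDom n f (p.1+1) ∧ p.1 ≠ n ∧ p.2 ≠ n ∧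
    ¬ Bad1 n f p ∧ ¬ Bad2 n f p := by
  rw [Tg, Finset.mem_filter] at hp
  obtain ⟨h1, h2⟩ := hp
  rw [InSP] at h2
  push_neg at h2
  exact ⟨h1, h2.1, h2.2.1, h2.2.2.1, h2.2.2.2.1, h2.2.2.2.2.1, h2.2.2.2.2.2.1,
    h2.2.2.2.2.2.2.1, h2.2.2.2.2.2.2.2.1, h2.2.2.2.2.2.2.2.2⟩

lemma forceH {a b : ℕ × ℕ} (ha : a ∈ Tg n f) (hb : b ∈ Tg n f)
    (h1 : a.1 = b.1) (h2 : a.2 + 1 = b.2) : Fc n f a = Fc n f b := by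
  obtain ⟨_, a1, a2, a3, a4, a5, _, _, anb1, _⟩ := Tg_props ha
  obtain ⟨_, b1, b2, b3, b4, b5, _, _, _, _⟩ := Tg_props hb
  rw [Bad1] at anb1
  apply fin4_force (c0c n f) (cDom n f (a.2+1)) (rDom n f a.1) (rDom n f (a.1+1)) _ _ anb1
  · exact ⟨a1, a3, a4, a5⟩
  · refine ⟨b1, ?_, ?_, ?_⟩
    · rw [h2]; exact b2
    · rw [h1]; exact b4
    · rw [h1]; exact b5

lemma forceV {a b : ℕ × ℕ} (ha : a ∈ Tg n f) (hb : b ∈ Tg n f)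
    (h1 : a.2 = b.2) (h2 : a.1 + 1 = b.1) : Fc n f a = Fc n f b := by
  obtain ⟨_, a1, a2, a3, a4, a5, _, _, _, anb2⟩ := Tg_props ha
  obtain ⟨_, b1, b2, b3, b4, b5, _, _, _, _⟩ := Tg_props hb
  rw [Bad2] at anb2
  apply fin4_force (c0c n f) (cDom n f a.2) (cDom n f (a.2+1)) (rDom n f (a.1+1)) _ _ anb2
  · exact ⟨a1, a2, a3, a5⟩
  · refine ⟨b1, ?_, ?_, ?_⟩
    · rw [h1]; exact b2
    · rw [h1]; exact b3
    · rw [h2]; exact b4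

lemma forceAdj {a b : ℕ × ℕ} (ha : a ∈ Tg n f) (hb : b ∈ Tg n f)
    (h : cartAdj a b) : Fc n f a = Fc n f b := by
  rcases h with ⟨h1, h2 | h2⟩ | ⟨h1, h2 | h2⟩
  · exact forceH ha hb h1 h2
  · exact (forceH hb ha h1.symm h2).symm
  · exact forceV ha hb h1 h2
  · exact (forceV hb ha h1.symm h2).symm

lemma adjmapH {a b : ℕ × ℕ} (ha : a ∈ gridP n) (hb : b ∈ gridP n)
    (h1 : a.1 = b.1) (h2 : a.2 + 1 = b.2) : (SPG n).Adj (iot n a) (iot n b) := by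
  have hga := mem_gridP.mp ha
  have hgb := mem_gridP.mp hb
  refine Or.inl ⟨?_, ?_⟩
  · show ((a.1 : Fin (n+1))) = ((b.1 : Fin (n+1)))
    rw [h1]
  · apply fan_adj_succ
    show ((a.2 : Fin (n+1)) : ℕ) + 1 = ((b.2 : Fin (n+1)) : ℕ)
    rw [val_cast_le hga.2.2.2, val_cast_le hgb.2.2.2]
    exact h2

lemma adjmapV {a b : ℕ × ℕ} (ha : a ∈ gridP n) (hb : b ∈ gridP n)
    (h1 : a.2 = b.2) (h2 : a.1 + 1 = b.1) : (SPG n).Adj (iot n a) (iot n b) := by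
  have hga := mem_gridP.mp ha
  have hgb := mem_gridP.mp hb
  refine Or.inr (Or.inl ⟨?_, ?_⟩)
  · show ((a.2 : Fin (n+1))) = ((b.2 : Fin (n+1)))
    rw [h1]
  · apply fan_adj_succ
    show ((a.1 : Fin (n+1)) : ℕ) + 1 = ((b.1 : Fin (n+1)) : ℕ)
    rw [val_cast_le hga.2.1, val_cast_le hgb.2.1]
    exact h2

lemma adjmap {a b : ℕ × ℕ} (ha : a ∈ gridP n) (hb : b ∈ gridP n)
    (h : cartAdj a b) : (SPG n).Adj (iot n a) (iot n b) := by
  rcases h with ⟨h1, h2 | h2⟩ | ⟨h1, h2 | h2⟩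
  · exact adjmapH ha hb h1 h2
  · exact (adjmapH hb ha h1.symm h2).symm
  · exact adjmapV ha hb h1 h2
  · exact (adjmapV hb ha h1.symm h2).symm

section WithHk6
variable
  (Hk : ∀ S : Finset (Fin (n+1) × Fin (n+1)), IsMonochromatic f S →
    ((SPG n).induce (S : Set (Fin (n+1) × Fin (n+1)))).Connected → S.card ≤ k)

include Hk

lemma Tg_comp_card (p : ℕ × ℕ) (hp : p ∈ Tg n f) :
    ((Tg n f).filter (fun q => ReachIn (Tg n f) p q)).card ≤ k := by
  classical
  set C := (Tg n f).filter (fun q => ReachIn (Tg n f) p q) with hCdef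
  have hCsub : C ⊆ Tg n f := Finset.filter_subset _ _
  have hCg : C ⊆ gridP n := fun q hq => Tg_subset_gridP (hCsub hq)
  have hmono : ∀ q ∈ C, Fc n f q = Fc n f p := by
    intro q hq
    rw [hCdef, Finset.mem_filter] at hq
    have : ∀ q', ReachIn (Tg n f) p q' → Fc n f q' = Fc n f p := by
      intro q' hq'
      induction hq' with
      | refl => rfl
      | tail hab hbc ih => exact (forceAdj hbc.1 hbc.2.1 hbc.2.2).symm.trans ih
    exact this q hq.2
  have hpC : p ∈ C := Finset.mem_filter.mpr ⟨hp, Relation.ReflTransGen.refl⟩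
  have hpI : iot n p ∈ C.image (iot n) := Finset.mem_image_of_mem _ hpC
  have hinj : Set.InjOn (iot n) C := fun a haa b hbb h =>
    iot_injOn (hCg haa) (hCg hbb) h
  rw [← Finset.card_image_of_injOn hinj]
  apply Hk
  · intro u hu v hv
    obtain ⟨q, hq, rfl⟩ := Finset.mem_image.mp hu
    obtain ⟨q', hq', rfl⟩ := Finset.mem_image.mp hv
    show Fc n f q = Fc n f q'
    rw [hmono q hq, hmono q' hq']
  · apply connected_of_reach _ (iot n p) hpI
    intro u hu
    obtain ⟨q, hq, rfl⟩ := Finset.mem_image.mp hu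
    rw [hCdef, Finset.mem_filter] at hq
    have key : ∀ q', ReachIn (Tg n f) p q' → ∀ (hq' : iot n q' ∈ C.image (iot n)),
        ((SPG n).induce ((C.image (iot n)) : Set (Fin (n+1) × Fin (n+1)))).Reachable
          ⟨iot n q', hq'⟩ ⟨iot n p, hpI⟩ := by
      intro q' hq'
      induction hq' with
      | refl => intro _; exact SimpleGraph.Reachable.refl _
      | tail hab hbc ih =>
        intro hc
        rename_i b c
        have hbC : b ∈ C := Finset.mem_filter.mpr ⟨hbc.1, hab⟩
        have hbI : iot n b ∈ C.image (iot n) := Finset.mem_image_of_mem _ hbC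
        have hadj : (SPG n).Adj (iot n c) (iot n b) :=
          (adjmap (Tg_subset_gridP hbc.1) (Tg_subset_gridP hbc.2.1) hbc.2.2).symm
        exact ((induce_adj_aux (Finset.mem_coe.mpr hc) (Finset.mem_coe.mpr hbI)
          hadj).reachable).trans (ih hbI)
    exact key q hq.2 (Finset.mem_image_of_mem _ (Finset.mem_filter.mpr hq))

lemma key_bound (hn : 1 ≤ n) (hk : 1 ≤ k) (hkn : k ≤ n) :
    n * n ≤ (Nat.sqrt k + 2) * (25 * (n * k)) := by
  classical
  have h := grid_count n k (Sb n f) (Tg n f) ?_ ?_ ?_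
  · exact le_trans h (Nat.mul_le_mul_left _ (Sb_card_le Hk hn hk hkn))
  · intro p hp
    rw [Finset.mem_union]
    by_cases h : InSP n f p
    · left
      rw [Sb, Finset.mem_filter]
      exact ⟨hp, h⟩
    · right
      rw [Tg, Finset.mem_filter]
      exact ⟨hp, h⟩
  · intro p hp
    have h := Tg_props hp
    have hg := mem_gridP.mp h.1
    have h1 := h.2.2.2.2.2.2.1
    have h2 := h.2.2.2.2.2.2.2.1
    omega
  · exact fun p hp => Tg_comp_card Hk p hp

end WithHk6
end FanProof6


/-- There is an absolute constant `δ > 0` such that for all `n ≥ 1`, every 4-colouring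
of `F_n ⊠ F_n` has a monochromatic component with at least `δ·n^{2/3}` vertices. -/
theorem four_colour_fan_lower :
    ∃ δ : ℝ, 0 < δ ∧ ∀ n : ℕ, 1 ≤ n → ∀ f : Fin (n + 1) × Fin (n + 1) → Fin 4,
      ∃ S : Finset (Fin (n + 1) × Fin (n + 1)), IsMonochromatic f S ∧
        ((StrongProd (Fan n) (Fan n)).induce
          (S : Set (Fin (n + 1) × Fin (n + 1)))).Connected ∧
        δ * (n : ℝ) ^ ((2 : ℝ) / 3) ≤ (S.card : ℝ) := by
  refine ⟨(1:ℝ)/10000, by norm_num, ?_⟩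
  intro n hn f
  set β : ℝ := (1:ℝ)/10000 * (n : ℝ) ^ ((2 : ℝ) / 3) with hβdef
  by_cases hsmall : β ≤ 1
  · refine ⟨{((0 : Fin (n+1)), (0 : Fin (n+1)))}, ?_, ?_, ?_⟩
    · intro u hu v hv
      rw [Finset.mem_singleton] at hu hv
      rw [hu, hv]
    · apply connected_of_hub _ ((0 : Fin (n+1)), (0 : Fin (n+1)))
        (Finset.mem_singleton_self _)
      intro u hu hne
      rw [Finset.mem_singleton] at hu
      exact absurd hu hne
    · rw [Finset.card_singleton]
      exact_mod_cast hsmall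
  · by_contra hcon
    push_neg at hcon
    have hβpos : 0 ≤ β := by positivity
    have hβ1 : 1 < β := lt_of_not_ge hsmall
    set k : ℕ := Nat.floor β with hkdef
    have hk1 : 1 ≤ k := by
      rw [hkdef]
      exact Nat.le_floor (by push_cast; linarith)
    have hkβ : (k : ℝ) ≤ β := Nat.floor_le hβpos
    have Hk : ∀ S : Finset (Fin (n+1) × Fin (n+1)), IsMonochromatic f S →
        ((SPG n).induce (S : Set (Fin (n+1) × Fin (n+1)))).Connected → S.card ≤ k := by
      intro S h1 h2
      exact Nat.le_floor (le_of_lt (hcon S h1 h2))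
    have hn0 : (0:ℝ) < (n:ℝ) := by exact_mod_cast hn
    have hkn : k ≤ n := by
      have h23 : (n:ℝ) ^ ((2:ℝ)/3) ≤ (n:ℝ) := by
        calc (n:ℝ) ^ ((2:ℝ)/3) ≤ (n:ℝ) ^ (1:ℝ) :=
          Real.rpow_le_rpow_of_exponent_le (by exact_mod_cast hn) (by norm_num)
        _ = (n:ℝ) := Real.rpow_one _
      have hr : (k:ℝ) ≤ (n:ℝ) := by
        have hx : (0:ℝ) ≤ (n:ℝ) ^ ((2:ℝ)/3) := Real.rpow_nonneg (le_of_lt hn0) _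
        calc (k:ℝ) ≤ β := hkβ
        _ = (1:ℝ)/10000 * (n : ℝ) ^ ((2 : ℝ) / 3) := hβdef
        _ ≤ (n : ℝ) ^ ((2 : ℝ) / 3) := by linarith
        _ ≤ (n:ℝ) := h23
      exact_mod_cast hr
    have hmain := key_bound Hk hn hk1 hkn
    have hs1 : 1 ≤ Nat.sqrt k := Nat.le_sqrt.mpr (by omega)
    have hstep : n * n ≤ n * (75 * (k * Nat.sqrt k)) := by
      calc n * n ≤ (Nat.sqrt k + 2) * (25 * (n * k)) := hmain
      _ ≤ (3 * Nat.sqrt k) * (25 * (n * k)) := Nat.mul_le_mul_right _ (by omega)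
      _ = n * (75 * (k * Nat.sqrt k)) := by ring
    have hfinal : n ≤ 75 * (k * Nat.sqrt k) := Nat.le_of_mul_le_mul_left hstep hn
    have hsq : (Nat.sqrt k) * (Nat.sqrt k) ≤ k := by
      have h := Nat.sqrt_le' k
      rwa [pow_two] at h
    have hnat2 : n * n ≤ 5625 * (k * k * k) := by
      calc n * n ≤ (75 * (k * Nat.sqrt k)) * (75 * (k * Nat.sqrt k)) :=
        Nat.mul_le_mul hfinal hfinal
      _ = 5625 * (k * k * (Nat.sqrt k * Nat.sqrt k)) := by ring
      _ ≤ 5625 * (k * k * k) := Nat.mul_le_mul_left _ (Nat.mul_le_mul_left _ hsq)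
    have hreal : ((n:ℝ)) * (n:ℝ) ≤ 5625 * ((k:ℝ) * (k:ℝ) * (k:ℝ)) := by exact_mod_cast hnat2
    have hk0 : (0:ℝ) ≤ (k:ℝ) := by positivity
    have t1 : (k:ℝ) * (k:ℝ) ≤ β * β := mul_le_mul hkβ hkβ hk0 hβpos
    have hkβ3 : (k:ℝ) * (k:ℝ) * (k:ℝ) ≤ β * β * β :=
      mul_le_mul t1 hkβ hk0 (mul_nonneg hβpos hβpos)
    have hβ3 : β * β * β = ((1:ℝ)/10000)^3 * ((n:ℝ) * (n:ℝ)) := by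
      rw [hβdef]
      have h1 : (n:ℝ) ^ ((2:ℝ)/3) * (n:ℝ) ^ ((2:ℝ)/3) * (n:ℝ) ^ ((2:ℝ)/3)
          = (n:ℝ) * (n:ℝ) := by
        rw [← Real.rpow_add hn0, ← Real.rpow_add hn0]
        have : (2:ℝ)/3 + 2/3 + 2/3 = 2 := by norm_num
        rw [this]
        rw [show (2:ℝ) = ((2:ℕ):ℝ) by norm_num, Real.rpow_natCast]
        ring
      calc (1:ℝ)/10000 * (n : ℝ) ^ ((2 : ℝ) / 3) * ((1:ℝ)/10000 * (n : ℝ) ^ ((2 : ℝ) / 3)) *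
          ((1:ℝ)/10000 * (n : ℝ) ^ ((2 : ℝ) / 3))
          = ((1:ℝ)/10000)^3 * ((n:ℝ) ^ ((2:ℝ)/3) * (n:ℝ) ^ ((2:ℝ)/3) * (n:ℝ) ^ ((2:ℝ)/3)) := by
            ring
      _ = ((1:ℝ)/10000)^3 * ((n:ℝ) * (n:ℝ)) := by rw [h1]
    have hN1 : (1:ℝ) ≤ (n:ℝ) * (n:ℝ) := by nlinarith
    nlinarith [hreal, hkβ3, hβ3, hN1]
end

section
/- For every integer n ≥ 2, there exists a 4-colouring of F_{n^3} ⊠ F_{n^3} in which every monochromatic component has at most 7·n^2 vertices. -/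
open SimpleGraph

universe u v

namespace FourColourAux


lemma step (k x : ℕ) (hk : 0 < k) :
    ((x+1)/k = x/k ∧ (x+1)%k = x%k + 1) ∨
    ((x+1)/k = x/k + 1 ∧ (x+1)%k = 0 ∧ x%k + 1 = k) := by
  have h1 := Nat.div_add_mod x k
  have h2 := Nat.div_add_mod (x+1) k
  have h3 : x % k < k := Nat.mod_lt _ hk
  have h4 : (x+1) % k < k := Nat.mod_lt _ hk
  have h5 : x / k ≤ (x+1)/k := Nat.div_le_div_right (Nat.le_succ x)
  have h6 : (x+1)/k ≤ x/k + 1 := by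
    have h7 : (x + k)/k = x/k + 1 := Nat.add_div_right x hk
    have h8 : (x+1)/k ≤ (x+k)/k := Nat.div_le_div_right (by omega)
    omega
  rcases Nat.eq_or_lt_of_le h5 with h | h
  · rw [← h] at h2
    left
    refine ⟨h.symm, ?_⟩
    generalize k * (x / k) = K at h1 h2
    omega
  · have h9 : (x+1)/k = x/k + 1 := by omega
    rw [h9, Nat.mul_add, Nat.mul_one] at h2
    right
    refine ⟨h9, ?_⟩
    generalize k * (x / k) = K at h1 h2
    omega

lemma eucl {N x x' y y' : ℕ} (h : x * N + y = x' * N + y') (hy : y < N) (hy' : y' < N) :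
    x = x' ∧ y = y' := by
  have hN : 0 < N := by omega
  have e1 : (x * N + y) / N = x := by
    rw [Nat.mul_comm, Nat.mul_add_div hN, Nat.div_eq_of_lt hy]; omega
  have e2 : (x' * N + y') / N = x' := by
    rw [Nat.mul_comm, Nat.mul_add_div hN, Nat.div_eq_of_lt hy']; omega
  have hx : x = x' := by rw [← e1, ← e2, h]
  subst hx
  exact ⟨rfl, by omega⟩

def jj (n b : ℕ) : ℕ := (b - 1) / n
def pp (n b : ℕ) : ℕ := (b - 1) % n
def qq (n a : ℕ) : ℕ := (a - 1) % (7 * n)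
def kk (n a : ℕ) : ℕ := (a - 1) / (7 * n)
def sN (n b : ℕ) : ℕ := 3 * (jj n b % 2)
def cI (n a b : ℕ) : ℕ := (a + (7 * n - 1 - sN n b)) / (7 * n)
def rI (n a b : ℕ) : ℕ := (a + (7 * n - 1 - sN n b)) % (7 * n)

def fN (n a b : ℕ) : ℕ :=
  if a = 0 then
    if b = 0 then 3
    else if pp n b = 0 ∨ pp n b = n - 1 then 3 else (jj n b + 1) % 2
  else if b = 0 then
    if qq n a ≤ 4 ∨ qq n a = 7 * n - 1 then 3 else 2
  else if (jj n b % 2 = 0 ∧ qq n a = 0) ∨ (jj n b % 2 = 1 ∧ qq n a = 3) then 2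
  else jj n b % 2

def PN (n a b : ℕ) : ℕ :=
  if fN n a b = 3 then 0
  else if a = 0 then 1 + 4 * jj n b
  else if b = 0 then 2 + 4 * kk n a
  else if fN n a b = 2 then 3 + 4 * (a * n ^ 2 + jj n b)
  else 4 * (jj n b * n ^ 2 + cI n a b) + 4

def LN (n a b : ℕ) : ℕ :=
  if fN n a b = 3 then
    if a = 0 then
      if b = 0 then 0 else 1 + 2 * jj n b + (if pp n b = 0 then 0 else 1)
    else 1 + 2 * n ^ 2 + 6 * kk n a + (if qq n a ≤ 4 then qq n a else 5)
  else if a = 0 then pp n b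
  else if b = 0 then qq n a
  else if fN n a b = 2 then pp n b
  else rI n a b * n + pp n b

lemma fN_lt4 (n a b : ℕ) : fN n a b < 4 := by
  unfold fN
  have h1 : (jj n b + 1) % 2 < 2 := Nat.mod_lt _ (by omega)
  have h2 : jj n b % 2 < 2 := Nat.mod_lt _ (by omega)
  split_ifs <;> omega

lemma jj_lt (n b : ℕ) (hn : 2 ≤ n) (hb : b ≤ n ^ 3) : jj n b < n ^ 2 := by
  unfold jj
  rw [Nat.div_lt_iff_lt_mul (by omega)]
  have h : n ^ 2 * n = n ^ 3 := by ring
  have h2 : 0 < n ^ 3 := by positivity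
  omega

lemma pp_lt (n b : ℕ) (hn : 2 ≤ n) : pp n b < n := Nat.mod_lt _ (by omega)

lemma qq_lt (n a : ℕ) (hn : 2 ≤ n) : qq n a < 7 * n := Nat.mod_lt _ (by omega)

lemma rI_lt (n a b : ℕ) (hn : 2 ≤ n) : rI n a b < 7 * n := Nat.mod_lt _ (by omega)

lemma kk6_lt (n a : ℕ) (hn : 2 ≤ n) (ha : a ≤ n ^ 3) : 6 * kk n a < n ^ 2 := by
  have h1 : kk n a * (7 * n) ≤ a - 1 := Nat.div_mul_le_self _ _
  by_contra hc
  push_neg at hc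
  have hpos : 0 < n ^ 3 := by positivity
  have h2 : n * n ^ 2 < n * n ^ 2 := by
    calc n * n ^ 2 ≤ n * (6 * kk n a) := Nat.mul_le_mul_left n hc
      _ ≤ 7 * (n * kk n a) := by
          have e : n * (6 * kk n a) = 6 * (n * kk n a) := by ring
          rw [e]
          exact Nat.mul_le_mul_right _ (by omega)
      _ = kk n a * (7 * n) := by ring
      _ ≤ a - 1 := h1
      _ < n ^ 3 := by omega
      _ = n * n ^ 2 := by ring
  exact absurd h2 (lt_irrefl _)

lemma cI_lt (n a b : ℕ) (hn : 2 ≤ n) (ha : a ≤ n ^ 3) : cI n a b < n ^ 2 := by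
  unfold cI
  rw [Nat.div_lt_iff_lt_mul (by omega)]
  have h : n ^ 2 * (7 * n) = 7 * n ^ 3 := by ring
  have h4 : 4 ≤ n * n := Nat.mul_le_mul hn hn
  have h2 : 7 * n ≤ 6 * n ^ 3 := by nlinarith
  have hpos : 0 < n ^ 3 := by positivity
  have h3 : sN n b ≤ 3 := by unfold sN; omega
  omega

lemma LN_lt (n a b : ℕ) (hn : 2 ≤ n) (ha : a ≤ n ^ 3) (hb : b ≤ n ^ 3) :
    LN n a b < 7 * n ^ 2 := by
  have hj := jj_lt n b hn hb
  have hp := pp_lt n b hn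
  have hq := qq_lt n a hn
  have hr := rI_lt n a b hn
  have hk6 := kk6_lt n a hn ha
  have hn2 : 4 ≤ n ^ 2 := by nlinarith
  have hnn : n ≤ n ^ 2 := by nlinarith
  unfold LN
  split_ifs <;> try omega
  -- chunk case: rI * n + pp < 7 n^2
  · calc rI n a b * n + pp n b < rI n a b * n + n := by omega
      _ ≤ (7 * n - 1) * n + n := by
          have : rI n a b ≤ 7 * n - 1 := by omega
          exact Nat.add_le_add_right (Nat.mul_le_mul_right n this) n
      _ = 7 * n * n - 1 * n + n := by rw [Nat.sub_mul]
      _ ≤ 7 * n ^ 2 := by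
          have h7 : 7 * n * n = 7 * n ^ 2 := by ring
          omega

lemma recon_b (n b b' : ℕ) (hn : 2 ≤ n) (hj : jj n b = jj n b') (hp : pp n b = pp n b')
    (hb : 1 ≤ b) (hb' : 1 ≤ b') : b = b' := by
  have e1 := Nat.div_add_mod (b-1) n
  have e2 := Nat.div_add_mod (b'-1) n
  unfold jj at hj
  unfold pp at hp
  rw [hj, hp] at e1
  generalize n * ((b'-1)/n) = K at e1 e2
  omega

lemma recon_a (n a a' : ℕ) (hn : 2 ≤ n) (hk : kk n a = kk n a') (hq : qq n a = qq n a')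
    (ha : 1 ≤ a) (ha' : 1 ≤ a') : a = a' := by
  have e1 := Nat.div_add_mod (a-1) (7*n)
  have e2 := Nat.div_add_mod (a'-1) (7*n)
  unfold kk at hk
  unfold qq at hq
  rw [hk, hq] at e1
  generalize 7*n * ((a'-1)/(7*n)) = K at e1 e2
  omega

lemma mod_zero_shift (n a s : ℕ) (hn : 2 ≤ n) (ha : 1 ≤ a) (hs : s ≤ 3)
    (h : (a + (7 * n - 1 - s)) % (7 * n) = 0) : (a - 1) % (7 * n) = s := by
  have hD := Nat.div_add_mod (a + (7*n-1-s)) (7*n)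
  rw [h, Nat.add_zero] at hD
  obtain ⟨D, hDdef⟩ : ∃ D, (a + (7*n-1-s))/(7*n) = D := ⟨_, rfl⟩
  rw [hDdef] at hD
  have hD1 : 1 ≤ D := by
    rcases Nat.eq_zero_or_pos D with hz | hz
    · rw [hz, Nat.mul_zero] at hD; omega
    · exact hz
  have e2 : 7*n*(D-1) + 7*n = 7*n*D := by
    rw [← Nat.mul_succ]
    congr 1
    omega
  have e3 : a - 1 = 7*n*(D-1) + s := by
    generalize 7*n*(D-1) = K1 at e2 ⊢
    generalize 7*n*D = K2 at e2 hD
    omega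
  rw [e3, Nat.mul_add_mod]
  exact Nat.mod_eq_of_lt (by omega)

/-! value lemmas -/

lemma vals_00 (n : ℕ) : fN n 0 0 = 3 ∧ PN n 0 0 = 0 ∧ LN n 0 0 = 0 := by
  have hf : fN n 0 0 = 3 := by unfold fN; rw [if_pos rfl, if_pos rfl]
  refine ⟨hf, ?_, ?_⟩
  · unfold PN; rw [hf]; rw [if_pos rfl]
  · unfold LN; rw [hf]; rw [if_pos rfl, if_pos rfl, if_pos rfl]

lemma vals_row3 (n b : ℕ) (hb : 1 ≤ b) (hc : pp n b = 0 ∨ pp n b = n-1) :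
    fN n 0 b = 3 ∧ PN n 0 b = 0 ∧
      LN n 0 b = 1 + 2 * jj n b + (if pp n b = 0 then 0 else 1) := by
  have hf : fN n 0 b = 3 := by unfold fN; rw [if_pos rfl, if_neg (by omega), if_pos hc]
  refine ⟨hf, ?_, ?_⟩
  · unfold PN; rw [hf]; rw [if_pos rfl]
  · unfold LN; rw [hf]; rw [if_pos rfl, if_pos rfl, if_neg (by omega)]

lemma vals_rowrun (n b : ℕ) (hn : 2 ≤ n) (hb : 1 ≤ b) (hc : ¬(pp n b = 0 ∨ pp n b = n-1)) :
    fN n 0 b = (jj n b + 1) % 2 ∧ PN n 0 b = 1 + 4 * jj n b ∧ LN n 0 b = pp n b := by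
  have h2 : (jj n b + 1) % 2 < 2 := Nat.mod_lt _ (by omega)
  have hf : fN n 0 b = (jj n b + 1) % 2 := by
    unfold fN; rw [if_pos rfl, if_neg (by omega), if_neg hc]
  refine ⟨hf, ?_, ?_⟩
  · unfold PN; rw [hf]; rw [if_neg (by omega), if_pos rfl]
  · unfold LN; rw [hf]; rw [if_neg (by omega), if_pos rfl]

lemma vals_col3 (n a : ℕ) (ha : 1 ≤ a) (hc : qq n a ≤ 4 ∨ qq n a = 7*n-1) :
    fN n a 0 = 3 ∧ PN n a 0 = 0 ∧
      LN n a 0 = 1 + 2 * n ^ 2 + 6 * kk n a + (if qq n a ≤ 4 then qq n a else 5) := by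
  have hf : fN n a 0 = 3 := by unfold fN; rw [if_neg (by omega), if_pos rfl, if_pos hc]
  refine ⟨hf, ?_, ?_⟩
  · unfold PN; rw [hf]; rw [if_pos rfl]
  · unfold LN; rw [hf]; rw [if_pos rfl, if_neg (by omega)]

lemma vals_colrun (n a : ℕ) (ha : 1 ≤ a) (hc : ¬(qq n a ≤ 4 ∨ qq n a = 7*n-1)) :
    fN n a 0 = 2 ∧ PN n a 0 = 2 + 4 * kk n a ∧ LN n a 0 = qq n a := by
  have hf : fN n a 0 = 2 := by unfold fN; rw [if_neg (by omega), if_pos rfl, if_neg hc]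
  refine ⟨hf, ?_, ?_⟩
  · unfold PN; rw [hf]; rw [if_neg (by omega), if_neg (by omega), if_pos rfl]
  · unfold LN; rw [hf]; rw [if_neg (by omega), if_neg (by omega), if_pos rfl]

lemma vals_seg (n a b : ℕ) (ha : 1 ≤ a) (hb : 1 ≤ b)
    (hc : (jj n b % 2 = 0 ∧ qq n a = 0) ∨ (jj n b % 2 = 1 ∧ qq n a = 3)) :
    fN n a b = 2 ∧ PN n a b = 3 + 4 * (a * n ^ 2 + jj n b) ∧ LN n a b = pp n b := by
  have hf : fN n a b = 2 := by unfold fN; rw [if_neg (by omega), if_neg (by omega), if_pos hc]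
  refine ⟨hf, ?_, ?_⟩
  · unfold PN; rw [hf]; rw [if_neg (by omega), if_neg (by omega), if_neg (by omega), if_pos rfl]
  · unfold LN; rw [hf]; rw [if_neg (by omega), if_neg (by omega), if_neg (by omega), if_pos rfl]

lemma vals_chunk (n a b : ℕ) (ha : 1 ≤ a) (hb : 1 ≤ b)
    (hc : ¬((jj n b % 2 = 0 ∧ qq n a = 0) ∨ (jj n b % 2 = 1 ∧ qq n a = 3))) :
    fN n a b = jj n b % 2 ∧ PN n a b = 4 * (jj n b * n ^ 2 + cI n a b) + 4 ∧
      LN n a b = rI n a b * n + pp n b := by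
  have h2 : jj n b % 2 < 2 := Nat.mod_lt _ (by omega)
  have hf : fN n a b = jj n b % 2 := by
    unfold fN; rw [if_neg (by omega), if_neg (by omega), if_neg hc]
  refine ⟨hf, ?_, ?_⟩
  · unfold PN; rw [hf]; rw [if_neg (by omega), if_neg (by omega), if_neg (by omega),
      if_neg (by omega)]
  · unfold LN; rw [hf]; rw [if_neg (by omega), if_neg (by omega), if_neg (by omega),
      if_neg (by omega)]

/-- kind classification for non colour-3 vertices -/
lemma kind (n a b : ℕ) (h3 : fN n a b ≠ 3) :
    (a = 0 ∧ 1 ≤ b ∧ ¬(pp n b = 0 ∨ pp n b = n-1)) ∨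
    (1 ≤ a ∧ b = 0 ∧ ¬(qq n a ≤ 4 ∨ qq n a = 7*n-1)) ∨
    (1 ≤ a ∧ 1 ≤ b ∧ ((jj n b % 2 = 0 ∧ qq n a = 0) ∨ (jj n b % 2 = 1 ∧ qq n a = 3))) ∨
    (1 ≤ a ∧ 1 ≤ b ∧ ¬((jj n b % 2 = 0 ∧ qq n a = 0) ∨ (jj n b % 2 = 1 ∧ qq n a = 3))) := by
  rcases Nat.eq_zero_or_pos a with ha | ha
  · subst ha
    rcases Nat.eq_zero_or_pos b with hb | hb
    · subst hb; exact absurd (vals_00 n).1 h3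
    · by_cases hc : pp n b = 0 ∨ pp n b = n-1
      · exact absurd (vals_row3 n b hb hc).1 h3
      · exact Or.inl ⟨rfl, hb, hc⟩
  · rcases Nat.eq_zero_or_pos b with hb | hb
    · subst hb
      by_cases hc : qq n a ≤ 4 ∨ qq n a = 7*n-1
      · exact absurd (vals_col3 n a ha hc).1 h3
      · exact Or.inr (Or.inl ⟨ha, rfl, hc⟩)
    · by_cases hc : (jj n b % 2 = 0 ∧ qq n a = 0) ∨ (jj n b % 2 = 1 ∧ qq n a = 3)
      · exact Or.inr (Or.inr (Or.inl ⟨ha, hb, hc⟩))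
      · exact Or.inr (Or.inr (Or.inr ⟨ha, hb, hc⟩))

lemma kind3 (n a b : ℕ) (hn : 2 ≤ n) (h3 : fN n a b = 3) :
    (a = 0 ∧ b = 0) ∨
    (a = 0 ∧ 1 ≤ b ∧ (pp n b = 0 ∨ pp n b = n-1)) ∨
    (1 ≤ a ∧ b = 0 ∧ (qq n a ≤ 4 ∨ qq n a = 7*n-1)) := by
  rcases Nat.eq_zero_or_pos a with ha | ha <;> rcases Nat.eq_zero_or_pos b with hb | hb
  · exact Or.inl ⟨ha, hb⟩
  · subst ha
    by_cases hc : pp n b = 0 ∨ pp n b = n-1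
    · exact Or.inr (Or.inl ⟨rfl, hb, hc⟩)
    · have := (vals_rowrun n b hn hb hc).1
      have h2 : (jj n b + 1) % 2 < 2 := Nat.mod_lt _ (by omega)
      omega
  · subst hb
    by_cases hc : qq n a ≤ 4 ∨ qq n a = 7*n-1
    · exact Or.inr (Or.inr ⟨ha, rfl, hc⟩)
    · have := (vals_colrun n a ha hc).1
      omega
  · by_cases hc : (jj n b % 2 = 0 ∧ qq n a = 0) ∨ (jj n b % 2 = 1 ∧ qq n a = 3)
    · have := (vals_seg n a b ha hb hc).1
      omega
    · have := (vals_chunk n a b ha hb hc).1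
      have h2 : jj n b % 2 < 2 := Nat.mod_lt _ (by omega)
      omega

set_option maxHeartbeats 2000000 in
lemma inj (n a b a' b' : ℕ) (hn : 2 ≤ n) (ha : a ≤ n^3) (hb : b ≤ n^3)
    (ha' : a' ≤ n^3) (hb' : b' ≤ n^3)
    (hf : fN n a b = fN n a' b') (hP : PN n a b = PN n a' b') (hL : LN n a b = LN n a' b') :
    a = a' ∧ b = b' := by
  have hjb := jj_lt n b hn hb
  have hjb' := jj_lt n b' hn hb'
  have hpb := pp_lt n b hn
  have hpb' := pp_lt n b' hn
  have hn2 : 4 ≤ n ^ 2 := by nlinarith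
  by_cases h3 : fN n a b = 3
  · have h3' : fN n a' b' = 3 := by omega
    rcases kind3 n a b hn h3 with ⟨hu1, hu2⟩ | ⟨hu1, hu2, hu3⟩ | ⟨hu1, hu2, hu3⟩ <;>
      rcases kind3 n a' b' hn h3' with ⟨hv1, hv2⟩ | ⟨hv1, hv2, hv3⟩ | ⟨hv1, hv2, hv3⟩
    · exact ⟨by omega, by omega⟩
    · subst hu1; subst hu2; subst hv1
      rw [(vals_00 n).2.2, (vals_row3 n b' hv2 hv3).2.2] at hL
      split_ifs at hL <;> omega
    · subst hu1; subst hu2; subst hv2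
      rw [(vals_00 n).2.2, (vals_col3 n a' hv1 hv3).2.2] at hL
      split_ifs at hL <;> omega
    · subst hu1; subst hv1; subst hv2
      rw [(vals_00 n).2.2, (vals_row3 n b hu2 hu3).2.2] at hL
      split_ifs at hL <;> omega
    · -- row3 / row3
      subst hu1; subst hv1
      rw [(vals_row3 n b hu2 hu3).2.2, (vals_row3 n b' hv2 hv3).2.2] at hL
      refine ⟨rfl, ?_⟩
      have hj : jj n b = jj n b' := by split_ifs at hL <;> omega
      have hp : pp n b = pp n b' := by split_ifs at hL <;> omega
      exact recon_b n b b' hn hj hp hu2 hv2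
    · -- row3 / col3
      subst hu1; subst hv2
      rw [(vals_row3 n b hu2 hu3).2.2, (vals_col3 n a' hv1 hv3).2.2] at hL
      exfalso
      split_ifs at hL <;> omega
    · subst hu2; subst hv1; subst hv2
      rw [(vals_col3 n a hu1 hu3).2.2, (vals_00 n).2.2] at hL
      split_ifs at hL <;> omega
    · -- col3 / row3
      subst hu2; subst hv1
      rw [(vals_col3 n a hu1 hu3).2.2, (vals_row3 n b' hv2 hv3).2.2] at hL
      exfalso
      split_ifs at hL <;> omega
    · -- col3 / col3
      subst hu2; subst hv2
      rw [(vals_col3 n a hu1 hu3).2.2, (vals_col3 n a' hv1 hv3).2.2] at hL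
      refine ⟨?_, rfl⟩
      have hqa := qq_lt n a hn
      have hqa' := qq_lt n a' hn
      have hk : kk n a = kk n a' := by split_ifs at hL <;> omega
      have hq : qq n a = qq n a' := by split_ifs at hL <;> omega
      exact recon_a n a a' hn hk hq hu1 hv1
  · have h3' : fN n a' b' ≠ 3 := by omega
    rcases kind n a b h3 with ⟨hu1, hu2, hu3⟩ | ⟨hu1, hu2, hu3⟩ | ⟨hu1, hu2, hu3⟩ |
      ⟨hu1, hu2, hu3⟩ <;>
      rcases kind n a' b' h3' with ⟨hv1, hv2, hv3⟩ | ⟨hv1, hv2, hv3⟩ | ⟨hv1, hv2, hv3⟩ |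
        ⟨hv1, hv2, hv3⟩
    · -- rowrun / rowrun
      subst hu1; subst hv1
      obtain ⟨_, hP1, hL1⟩ := vals_rowrun n b hn hu2 hu3
      obtain ⟨_, hP2, hL2⟩ := vals_rowrun n b' hn hv2 hv3
      rw [hP1, hP2] at hP
      rw [hL1, hL2] at hL
      refine ⟨rfl, recon_b n b b' hn (by omega) hL hu2 hv2⟩
    · -- rowrun / colrun : colour clash
      obtain ⟨hf1, _, _⟩ := vals_rowrun n b hn hu2 hu3
      obtain ⟨hf2, _, _⟩ := vals_colrun n a' hv1 hv3
      subst hu1; subst hv2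
      have h2 : (jj n b + 1) % 2 < 2 := Nat.mod_lt _ (by omega)
      omega
    · -- rowrun / seg
      obtain ⟨hf1, _, _⟩ := vals_rowrun n b hn hu2 hu3
      obtain ⟨hf2, _, _⟩ := vals_seg n a' b' hv1 hv2 hv3
      subst hu1
      have h2 : (jj n b + 1) % 2 < 2 := Nat.mod_lt _ (by omega)
      omega
    · -- rowrun / chunk : P clash mod 4
      obtain ⟨_, hP1, _⟩ := vals_rowrun n b hn hu2 hu3
      obtain ⟨_, hP2, _⟩ := vals_chunk n a' b' hv1 hv2 hv3
      subst hu1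
      rw [hP1, hP2] at hP
      exfalso
      generalize jj n b' * n ^ 2 + cI n a' b' = X at hP
      omega
    · -- colrun / rowrun
      obtain ⟨hf1, _, _⟩ := vals_colrun n a hu1 hu3
      obtain ⟨hf2, _, _⟩ := vals_rowrun n b' hn hv2 hv3
      subst hu2; subst hv1
      have h2 : (jj n b' + 1) % 2 < 2 := Nat.mod_lt _ (by omega)
      omega
    · -- colrun / colrun
      subst hu2; subst hv2
      obtain ⟨_, hP1, hL1⟩ := vals_colrun n a hu1 hu3
      obtain ⟨_, hP2, hL2⟩ := vals_colrun n a' hv1 hv3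
      rw [hP1, hP2] at hP
      rw [hL1, hL2] at hL
      exact ⟨recon_a n a a' hn (by omega) hL hu1 hv1, rfl⟩
    · -- colrun / seg : P clash
      subst hu2
      obtain ⟨_, hP1, _⟩ := vals_colrun n a hu1 hu3
      obtain ⟨_, hP2, _⟩ := vals_seg n a' b' hv1 hv2 hv3
      rw [hP1, hP2] at hP
      exfalso
      generalize a' * n ^ 2 + jj n b' = X at hP
      omega
    · -- colrun / chunk : colour clash
      subst hu2
      obtain ⟨hf1, _, _⟩ := vals_colrun n a hu1 hu3
      obtain ⟨hf2, _, _⟩ := vals_chunk n a' b' hv1 hv2 hv3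
      have h2 : jj n b' % 2 < 2 := Nat.mod_lt _ (by omega)
      omega
    · -- seg / rowrun
      subst hv1
      obtain ⟨hf1, _, _⟩ := vals_seg n a b hu1 hu2 hu3
      obtain ⟨hf2, _, _⟩ := vals_rowrun n b' hn hv2 hv3
      have h2 : (jj n b' + 1) % 2 < 2 := Nat.mod_lt _ (by omega)
      omega
    · -- seg / colrun : P clash
      subst hv2
      obtain ⟨_, hP1, _⟩ := vals_seg n a b hu1 hu2 hu3
      obtain ⟨_, hP2, _⟩ := vals_colrun n a' hv1 hv3
      rw [hP1, hP2] at hP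
      exfalso
      generalize a * n ^ 2 + jj n b = X at hP
      omega
    · -- seg / seg
      obtain ⟨_, hP1, hL1⟩ := vals_seg n a b hu1 hu2 hu3
      obtain ⟨_, hP2, hL2⟩ := vals_seg n a' b' hv1 hv2 hv3
      rw [hP1, hP2] at hP
      rw [hL1, hL2] at hL
      have hin : a * n ^ 2 + jj n b = a' * n ^ 2 + jj n b' := by
        generalize a * n ^ 2 + jj n b = X at hP
        generalize a' * n ^ 2 + jj n b' = Y at hP
        omega
      obtain ⟨hae, hje⟩ := eucl hin hjb hjb'
      exact ⟨hae, recon_b n b b' hn hje hL hu2 hv2⟩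
    · -- seg / chunk : colour clash
      obtain ⟨hf1, _, _⟩ := vals_seg n a b hu1 hu2 hu3
      obtain ⟨hf2, _, _⟩ := vals_chunk n a' b' hv1 hv2 hv3
      have h2 : jj n b' % 2 < 2 := Nat.mod_lt _ (by omega)
      omega
    · -- chunk / rowrun : P clash
      subst hv1
      obtain ⟨_, hP1, _⟩ := vals_chunk n a b hu1 hu2 hu3
      obtain ⟨_, hP2, _⟩ := vals_rowrun n b' hn hv2 hv3
      rw [hP1, hP2] at hP
      exfalso
      generalize jj n b * n ^ 2 + cI n a b = X at hP
      omega
    · -- chunk / colrun : colour clash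
      subst hv2
      obtain ⟨hf1, _, _⟩ := vals_chunk n a b hu1 hu2 hu3
      obtain ⟨hf2, _, _⟩ := vals_colrun n a' hv1 hv3
      have h2 : jj n b % 2 < 2 := Nat.mod_lt _ (by omega)
      omega
    · -- chunk / seg : colour clash
      obtain ⟨hf1, _, _⟩ := vals_chunk n a b hu1 hu2 hu3
      obtain ⟨hf2, _, _⟩ := vals_seg n a' b' hv1 hv2 hv3
      have h2 : jj n b % 2 < 2 := Nat.mod_lt _ (by omega)
      omega
    · -- chunk / chunk
      obtain ⟨_, hP1, hL1⟩ := vals_chunk n a b hu1 hu2 hu3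
      obtain ⟨_, hP2, hL2⟩ := vals_chunk n a' b' hv1 hv2 hv3
      rw [hP1, hP2] at hP
      rw [hL1, hL2] at hL
      have hin : jj n b * n ^ 2 + cI n a b = jj n b' * n ^ 2 + cI n a' b' := by
        generalize jj n b * n ^ 2 + cI n a b = X at hP
        generalize jj n b' * n ^ 2 + cI n a' b' = Y at hP
        omega
      obtain ⟨hje, hce⟩ := eucl hin (cI_lt n a b hn ha) (cI_lt n a' b' hn ha')
      obtain ⟨hre, hpe⟩ := eucl hL hpb hpb'
      refine ⟨?_, recon_b n b b' hn hje hpe hu2 hv2⟩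
      have hse : sN n b = sN n b' := by unfold sN; rw [hje]
      have e1 : 7*n * cI n a b + rI n a b = a + (7*n-1-sN n b) := by
        unfold cI rI
        exact Nat.div_add_mod _ _
      have e2 : 7*n * cI n a' b' + rI n a' b' = a' + (7*n-1-sN n b') := by
        unfold cI rI
        exact Nat.div_add_mod _ _
      rw [← hce, ← hre, ← hse] at e2
      generalize 7*n * cI n a b = K at e1 e2
      omega

set_option maxHeartbeats 4000000 in
lemma key (n a b a' b' : ℕ) (hn : 2 ≤ n) (ha : a ≤ n^3) (hb : b ≤ n^3)
    (ha' : a' ≤ n^3) (hb' : b' ≤ n^3)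
    (hadj : (a = a' ∧ (b ≠ b' ∧ (b = 0 ∨ b' = 0 ∨ b + 1 = b' ∨ b' + 1 = b))) ∨
            (b = b' ∧ (a ≠ a' ∧ (a = 0 ∨ a' = 0 ∨ a + 1 = a' ∨ a' + 1 = a))) ∨
            ((a ≠ a' ∧ (a = 0 ∨ a' = 0 ∨ a + 1 = a' ∨ a' + 1 = a)) ∧
             (b ≠ b' ∧ (b = 0 ∨ b' = 0 ∨ b + 1 = b' ∨ b' + 1 = b))))
    (hf : fN n a b = fN n a' b') : PN n a b = PN n a' b' := by
  by_cases h3 : fN n a b = 3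
  · have h3' : fN n a' b' = 3 := by omega
    unfold PN
    rw [if_pos h3, if_pos h3']
  · have h3' : fN n a' b' ≠ 3 := by omega
    rcases kind n a b h3 with ⟨hu1, hu2, hu3⟩ | ⟨hu1, hu2, hu3⟩ | ⟨hu1, hu2, hu3⟩ |
      ⟨hu1, hu2, hu3⟩ <;>
      rcases kind n a' b' h3' with ⟨hv1, hv2, hv3⟩ | ⟨hv1, hv2, hv3⟩ | ⟨hv1, hv2, hv3⟩ |
        ⟨hv1, hv2, hv3⟩
    · -- rowrun / rowrun
      subst hu1; subst hv1
      obtain ⟨_, hP1, _⟩ := vals_rowrun n b hn hu2 hu3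
      obtain ⟨_, hP2, _⟩ := vals_rowrun n b' hn hv2 hv3
      rw [hP1, hP2]
      have hbb : b + 1 = b' ∨ b' + 1 = b := by omega
      have hjj : jj n b = jj n b' := by
        unfold pp at hu3 hv3
        unfold jj
        rcases hbb with h | h
        · have hs := step n (b-1) (by omega)
          have hx : (b-1)+1 = b'-1 := by omega
          rw [hx] at hs
          omega
        · have hs := step n (b'-1) (by omega)
          have hx : (b'-1)+1 = b-1 := by omega
          rw [hx] at hs
          omega
      rw [hjj]
    · -- rowrun / colrun : colour clash
      subst hu1; subst hv2
      obtain ⟨hf1, _, _⟩ := vals_rowrun n b hn hu2 hu3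
      obtain ⟨hf2, _, _⟩ := vals_colrun n a' hv1 hv3
      have h2 : (jj n b + 1) % 2 < 2 := Nat.mod_lt _ (by omega)
      omega
    · -- rowrun / seg : colour clash
      subst hu1
      obtain ⟨hf1, _, _⟩ := vals_rowrun n b hn hu2 hu3
      obtain ⟨hf2, _, _⟩ := vals_seg n a' b' hv1 hv2 hv3
      have h2 : (jj n b + 1) % 2 < 2 := Nat.mod_lt _ (by omega)
      omega
    · -- rowrun / chunk : impossible
      subst hu1
      obtain ⟨hf1, _, _⟩ := vals_rowrun n b hn hu2 hu3
      obtain ⟨hf2, _, _⟩ := vals_chunk n a' b' hv1 hv2 hv3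
      exfalso
      have hbb : b = b' ∨ b + 1 = b' ∨ b' + 1 = b := by omega
      have hjj : jj n b = jj n b' := by
        unfold pp at hu3
        unfold jj
        rcases hbb with h | h | h
        · rw [h]
        · have hs := step n (b-1) (by omega)
          have hx : (b-1)+1 = b'-1 := by omega
          rw [hx] at hs
          omega
        · have hs := step n (b'-1) (by omega)
          have hx : (b'-1)+1 = b-1 := by omega
          rw [hx] at hs
          omega
      omega
    · -- colrun / rowrun : colour clash
      subst hu2; subst hv1
      obtain ⟨hf1, _, _⟩ := vals_colrun n a hu1 hu3
      obtain ⟨hf2, _, _⟩ := vals_rowrun n b' hn hv2 hv3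
      have h2 : (jj n b' + 1) % 2 < 2 := Nat.mod_lt _ (by omega)
      omega
    · -- colrun / colrun
      subst hu2; subst hv2
      obtain ⟨_, hP1, _⟩ := vals_colrun n a hu1 hu3
      obtain ⟨_, hP2, _⟩ := vals_colrun n a' hv1 hv3
      rw [hP1, hP2]
      have haa : a + 1 = a' ∨ a' + 1 = a := by omega
      have hkk : kk n a = kk n a' := by
        unfold qq at hu3 hv3
        unfold kk
        rcases haa with h | h
        · have hs := step (7*n) (a-1) (by omega)
          have hx : (a-1)+1 = a'-1 := by omega
          rw [hx] at hs
          omega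
        · have hs := step (7*n) (a'-1) (by omega)
          have hx : (a'-1)+1 = a-1 := by omega
          rw [hx] at hs
          omega
      rw [hkk]
    · -- colrun / seg : impossible
      subst hu2
      exfalso
      have haa : a = a' ∨ a + 1 = a' ∨ a' + 1 = a := by omega
      unfold qq at hu3 hv3
      rcases haa with h | h | h
      · subst h
        omega
      · have hs := step (7*n) (a-1) (by omega)
        have hx : (a-1)+1 = a'-1 := by omega
        rw [hx] at hs
        omega
      · have hs := step (7*n) (a'-1) (by omega)
        have hx : (a'-1)+1 = a-1 := by omega
        rw [hx] at hs
        omega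
    · -- colrun / chunk : colour clash
      subst hu2
      obtain ⟨hf1, _, _⟩ := vals_colrun n a hu1 hu3
      obtain ⟨hf2, _, _⟩ := vals_chunk n a' b' hv1 hv2 hv3
      have h2 : jj n b' % 2 < 2 := Nat.mod_lt _ (by omega)
      omega
    · -- seg / rowrun : colour clash
      subst hv1
      obtain ⟨hf1, _, _⟩ := vals_seg n a b hu1 hu2 hu3
      obtain ⟨hf2, _, _⟩ := vals_rowrun n b' hn hv2 hv3
      have h2 : (jj n b' + 1) % 2 < 2 := Nat.mod_lt _ (by omega)
      omega
    · -- seg / colrun : impossible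
      subst hv2
      exfalso
      have haa : a = a' ∨ a + 1 = a' ∨ a' + 1 = a := by omega
      unfold qq at hu3 hv3
      rcases haa with h | h | h
      · subst h
        omega
      · have hs := step (7*n) (a-1) (by omega)
        have hx : (a-1)+1 = a'-1 := by omega
        rw [hx] at hs
        omega
      · have hs := step (7*n) (a'-1) (by omega)
        have hx : (a'-1)+1 = a-1 := by omega
        rw [hx] at hs
        omega
    · -- seg / seg
      obtain ⟨_, hP1, _⟩ := vals_seg n a b hu1 hu2 hu3
      obtain ⟨_, hP2, _⟩ := vals_seg n a' b' hv1 hv2 hv3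
      rw [hP1, hP2]
      have haa : a = a' ∨ a + 1 = a' ∨ a' + 1 = a := by omega
      have hbb : b = b' ∨ b + 1 = b' ∨ b' + 1 = b := by omega
      have hae : a = a' := by
        rcases haa with h | h | h
        · exact h
        · exfalso
          have hs := step (7*n) (a-1) (by omega)
          have hx : (a-1)+1 = a'-1 := by omega
          rw [hx] at hs
          unfold qq at hu3 hv3
          omega
        · exfalso
          have hs := step (7*n) (a'-1) (by omega)
          have hx : (a'-1)+1 = a-1 := by omega
          rw [hx] at hs
          unfold qq at hu3 hv3
          omega
      subst hae
      have hje : jj n b = jj n b' := by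
        unfold qq at hu3 hv3
        unfold jj at hu3 hv3 ⊢
        rcases hbb with h | h | h
        · rw [h]
        · have hs := step n (b-1) (by omega)
          have hx : (b-1)+1 = b'-1 := by omega
          rw [hx] at hs
          omega
        · have hs := step n (b'-1) (by omega)
          have hx : (b'-1)+1 = b-1 := by omega
          rw [hx] at hs
          omega
      rw [hje]
    · -- seg / chunk : colour clash
      obtain ⟨hf1, _, _⟩ := vals_seg n a b hu1 hu2 hu3
      obtain ⟨hf2, _, _⟩ := vals_chunk n a' b' hv1 hv2 hv3
      have h2 : jj n b' % 2 < 2 := Nat.mod_lt _ (by omega)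
      omega
    · -- chunk / rowrun : impossible
      subst hv1
      obtain ⟨hf1, _, _⟩ := vals_chunk n a b hu1 hu2 hu3
      obtain ⟨hf2, _, _⟩ := vals_rowrun n b' hn hv2 hv3
      exfalso
      have hbb : b = b' ∨ b + 1 = b' ∨ b' + 1 = b := by omega
      have hjj : jj n b = jj n b' := by
        unfold pp at hv3
        unfold jj
        rcases hbb with h | h | h
        · rw [h]
        · have hs := step n (b-1) (by omega)
          have hx : (b-1)+1 = b'-1 := by omega
          rw [hx] at hs
          omega
        · have hs := step n (b'-1) (by omega)
          have hx : (b'-1)+1 = b-1 := by omega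
          rw [hx] at hs
          omega
      omega
    · -- chunk / colrun : colour clash
      subst hv2
      obtain ⟨hf1, _, _⟩ := vals_chunk n a b hu1 hu2 hu3
      obtain ⟨hf2, _, _⟩ := vals_colrun n a' hv1 hv3
      have h2 : jj n b % 2 < 2 := Nat.mod_lt _ (by omega)
      omega
    · -- chunk / seg : colour clash
      obtain ⟨hf1, _, _⟩ := vals_chunk n a b hu1 hu2 hu3
      obtain ⟨hf2, _, _⟩ := vals_seg n a' b' hv1 hv2 hv3
      have h2 : jj n b % 2 < 2 := Nat.mod_lt _ (by omega)
      omega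
    · -- chunk / chunk
      obtain ⟨hf1, hP1, _⟩ := vals_chunk n a b hu1 hu2 hu3
      obtain ⟨hf2, hP2, _⟩ := vals_chunk n a' b' hv1 hv2 hv3
      rw [hP1, hP2]
      have haa : a = a' ∨ a + 1 = a' ∨ a' + 1 = a := by omega
      have hbb : b = b' ∨ b + 1 = b' ∨ b' + 1 = b := by omega
      have hpar : jj n b % 2 = jj n b' % 2 := by omega
      have hje : jj n b = jj n b' := by
        unfold jj at hpar ⊢
        rcases hbb with h | h | h
        · rw [h]
        · have hs := step n (b-1) (by omega)
          have hx : (b-1)+1 = b'-1 := by omega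
          rw [hx] at hs
          omega
        · have hs := step n (b'-1) (by omega)
          have hx : (b'-1)+1 = b-1 := by omega
          rw [hx] at hs
          omega
      have hse : sN n b = sN n b' := by unfold sN; rw [hje]
      have hce : cI n a b = cI n a' b' := by
        rcases haa with h | h | h
        · unfold cI
          rw [h, hse]
        · have hs := step (7*n) (a + (7*n-1-sN n b)) (by omega)
          have hx : (a + (7*n-1-sN n b)) + 1 = a' + (7*n-1-sN n b') := by
            rw [← hse]; omega
          rw [hx] at hs
          unfold cI
          rcases hs with ⟨h1, _⟩ | ⟨h1, h2, h3⟩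
          · exact h1.symm
          · exfalso
            have hsb : sN n b' ≤ 3 := by unfold sN; omega
            have hms := mod_zero_shift n a' (sN n b') hn (by omega) hsb h2
            unfold qq at hv3
            unfold sN at hms
            omega
        · have hs := step (7*n) (a' + (7*n-1-sN n b')) (by omega)
          have hx : (a' + (7*n-1-sN n b')) + 1 = a + (7*n-1-sN n b) := by
            rw [hse]; omega
          rw [hx] at hs
          unfold cI
          rcases hs with ⟨h1, _⟩ | ⟨h1, h2, h3⟩
          · exact h1
          · exfalso
            have hsb : sN n b ≤ 3 := by unfold sN; omega
            have hms := mod_zero_shift n a (sN n b) hn (by omega) hsb h2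
            unfold qq at hu3
            unfold sN at hms
            omega
      rw [hje, hce]

end FourColourAux

open FourColourAux in
set_option maxHeartbeats 1000000 in
/-- For `n ≥ 2`, there is a 4-colouring of `F_{n³} ⊠ F_{n³}` with every monochromatic
component of size at most `7n²`. -/
theorem four_colour_fan_upper (n : ℕ) (hn : 2 ≤ n) :
    ∃ f : Fin (n ^ 3 + 1) × Fin (n ^ 3 + 1) → Fin 4,
      ClusterLE (StrongProd (Fan (n ^ 3)) (Fan (n ^ 3))) f (7 * n ^ 2) := by
  refine ⟨fun v => ⟨fN n v.1.val v.2.val, fN_lt4 n _ _⟩, ?_⟩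
  intro S hmono hconn
  rcases S.eq_empty_or_nonempty with hS | ⟨x₀, hx₀⟩
  · simp [hS]
  have hbnd : ∀ v : Fin (n ^ 3 + 1) × Fin (n ^ 3 + 1), v.1.val ≤ n ^ 3 ∧ v.2.val ≤ n ^ 3 :=
    fun v => ⟨Nat.lt_succ_iff.mp v.1.isLt, Nat.lt_succ_iff.mp v.2.isLt⟩
  have fanAdj : ∀ x y : Fin (n ^ 3 + 1), (Fan (n ^ 3)).Adj x y →
      (x.val ≠ y.val ∧ (x.val = 0 ∨ y.val = 0 ∨ x.val + 1 = y.val ∨ y.val + 1 = x.val)) := by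
    intro x y hxy
    rw [Fan, SimpleGraph.fromRel_adj] at hxy
    obtain ⟨hne, h⟩ := hxy
    refine ⟨fun hv => hne (Fin.ext hv), ?_⟩
    rcases h with (h | h) | (h | h)
    · left; rw [h]; rfl
    · right; right; left; exact h
    · right; left; rw [h]; rfl
    · right; right; right; exact h
  have keyV : ∀ u v : Fin (n ^ 3 + 1) × Fin (n ^ 3 + 1),
      (StrongProd (Fan (n ^ 3)) (Fan (n ^ 3))).Adj u v →
      fN n u.1.val u.2.val = fN n v.1.val v.2.val →
      PN n u.1.val u.2.val = PN n v.1.val v.2.val := by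
    intro u v huv hfe
    apply key n u.1.val u.2.val v.1.val v.2.val hn (hbnd u).1 (hbnd u).2 (hbnd v).1
      (hbnd v).2 ?_ hfe
    rcases huv with ⟨h1, h2⟩ | ⟨h1, h2⟩ | ⟨h1, h2⟩
    · exact Or.inl ⟨congrArg Fin.val h1, fanAdj _ _ h2⟩
    · exact Or.inr (Or.inl ⟨congrArg Fin.val h1, fanAdj _ _ h2⟩)
    · exact Or.inr (Or.inr ⟨fanAdj _ _ h1, fanAdj _ _ h2⟩)
  have hmono' : ∀ u ∈ S, ∀ v ∈ S, fN n u.1.val u.2.val = fN n v.1.val v.2.val := by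
    intro u hu v hv
    have h := hmono u hu v hv
    simpa using congrArg Fin.val h
  have hwalk : ∀ (p q : ↥(S : Set (Fin (n ^ 3 + 1) × Fin (n ^ 3 + 1))))
      (_ : ((StrongProd (Fan (n ^ 3)) (Fan (n ^ 3))).induce
        (S : Set (Fin (n ^ 3 + 1) × Fin (n ^ 3 + 1)))).Walk p q),
      PN n p.1.1.val p.1.2.val = PN n q.1.1.val q.1.2.val := by
    intro p q w
    induction w with
    | nil => rfl
    | @cons p q r h w ih =>
      refine Eq.trans ?_ ih
      have hA : (StrongProd (Fan (n ^ 3)) (Fan (n ^ 3))).Adj p.1 q.1 := h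
      exact keyV _ _ hA (hmono' _ (Finset.mem_coe.mp p.2) _ (Finset.mem_coe.mp q.2))
  have hPconst : ∀ v ∈ S, PN n v.1.val v.2.val = PN n x₀.1.val x₀.2.val := by
    intro v hv
    obtain ⟨w⟩ := hconn.preconnected ⟨v, Finset.mem_coe.mpr hv⟩ ⟨x₀, Finset.mem_coe.mpr hx₀⟩
    exact hwalk _ _ w
  have hcard : S.card ≤ (Finset.range (7 * n ^ 2)).card := by
    apply Finset.card_le_card_of_injOn (fun v => LN n v.1.val v.2.val)
    · intro v hv
      simp only [Finset.mem_coe, Finset.mem_range]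
      exact LN_lt n _ _ hn (hbnd v).1 (hbnd v).2
    · intro u hu v hv hLe
      have h1 := hmono' u (Finset.mem_coe.mp hu) v (Finset.mem_coe.mp hv)
      have h2 : PN n u.1.val u.2.val = PN n v.1.val v.2.val :=
        (hPconst u (Finset.mem_coe.mp hu)).trans (hPconst v (Finset.mem_coe.mp hv)).symm
      obtain ⟨e1, e2⟩ := inj n _ _ _ _ hn (hbnd u).1 (hbnd u).2 (hbnd v).1 (hbnd v).2 h1 h2 hLe
      exact Prod.ext (Fin.ext e1) (Fin.ext e2)
  simpa using hcard
end
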